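/- arXiv:1602.04586 — 13 statements merged into one kernel-verified Lean document; each statement's English description precedes it below -/
import Mathlib

section
/- If f^k is average chain transitive for some integer k > 1, then f is average chain transitive. -/
open Filter Finset

section Defs
variable {X : Type*} [PseudoMetricSpace X]

/-- `c` is a `δ`-average-chain of `f` from `x` to `y` of length `n`. -/
def avgChain (f : X → X) (δ : ℝ) (x y : X) (n : ℕ) : Prop :=
  ∃ c : ℕ → X, c 0 = x ∧ c n = y ∧ ∃ N : ℕ, 1 ≤ N ∧ N ≤ n ∧
    ∀ m : ℕ, N ≤ m → m ≤ n →
      (∑ i ∈ Finset.range m, dist (f (c i)) (c (i + 1))) / m < δ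

def avgChainTransitive (f : X → X) : Prop :=
  ∀ δ > (0:ℝ), ∀ x y : X, ∃ n : ℕ, avgChain f δ x y n

def avgChainMixing (f : X → X) : Prop :=
  ∀ δ > (0:ℝ), ∀ x y : X, ∃ n₀ : ℕ, ∀ n ≥ n₀, avgChain f δ x y n

/-- `c` is a `δ`-chain of `f` from `x` to `y` of length `n`. -/
def isChain (f : X → X) (δ : ℝ) (x y : X) (n : ℕ) : Prop :=
  ∃ c : ℕ → X, c 0 = x ∧ c n = y ∧ ∀ i < n, dist (f (c i)) (c (i + 1)) < δ

def chainTransitive (f : X → X) : Prop :=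
  ∀ δ > (0:ℝ), ∀ x y : X, ∃ n : ℕ, 0 < n ∧ isChain f δ x y n

def chainMixing (f : X → X) : Prop :=
  ∀ δ > (0:ℝ), ∀ x y : X, ∃ N : ℕ, 0 < N ∧ ∀ n ≥ N, isChain f δ x y n

/-- Chain equivalence: δ-chains both ways, for every δ. -/
def chainEquivalent (f : X → X) (x y : X) : Prop :=
  ∀ δ > (0:ℝ), (∃ n : ℕ, 0 < n ∧ isChain f δ x y n) ∧
    (∃ n : ℕ, 0 < n ∧ isChain f δ y x n)

def chainRecurrent (f : X → X) (x : X) : Prop := chainEquivalent f x x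

/-- almost average shadowing property -/
def ALASP (f : X → X) : Prop :=
  ∀ ε > (0:ℝ), ∃ δ > (0:ℝ), ∀ x : ℕ → X,
    Filter.atTop.limsup
        (fun n : ℕ => (∑ i ∈ Finset.range n, dist (f (x i)) (x (i + 1))) / n) < δ →
    ∃ z : X, Filter.atTop.limsup
        (fun n : ℕ => (∑ i ∈ Finset.range n, dist (f^[i] z) (x i)) / n) < ε

/-- average shadowing property -/
def ASP (f : X → X) : Prop :=
  ∀ ε > (0:ℝ), ∃ δ > (0:ℝ), ∀ x : ℕ → X,
    (∃ N : ℕ, 0 < N ∧ ∀ n ≥ N, ∀ k : ℕ,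
      (∑ i ∈ Finset.range n, dist (f (x (i + k))) (x (i + k + 1))) / n < δ) →
    ∃ z : X, Filter.atTop.limsup
        (fun n : ℕ => (∑ i ∈ Finset.range n, dist (f^[i] z) (x i)) / n) < ε

def shadowingProperty (f : X → X) : Prop :=
  ∀ ε > (0:ℝ), ∃ δ > (0:ℝ), ∀ x : ℕ → X,
    (∀ i : ℕ, dist (f (x i)) (x (i + 1)) < δ) →
    ∃ z : X, ∀ i : ℕ, dist (f^[i] z) (x i) < ε

/-- upper density of a set of nonnegative integers -/
noncomputable def upperDensity (A : Set ℕ) : ℝ :=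
  Filter.atTop.limsup (fun n : ℕ => ((A ∩ Set.Iio n).ncard : ℝ) / n)

end Defs

open scoped Classical in
noncomputable def discMetric (α : Type*) : MetricSpace α where
  dist x y := if x = y then 0 else 1
  dist_self x := by simp
  dist_comm x y := by by_cases h : x = y <;> simp [h, eq_comm]
  dist_triangle x y z := by
    by_cases h1 : x = y <;> by_cases h2 : y = z <;> by_cases h3 : x = z <;> simp_all
  eq_of_dist_eq_zero := by
    intro x y h
    by_cases hxy : x = y
    · exact hxy
    · simp [hxy] at h

theorem stmt0 {X : Type*} [MetricSpace X] (f : X → X) (hf : Continuous f)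
    (k : ℕ) (hk : 1 < k) (h : avgChainTransitive (f^[k])) :
    avgChainTransitive f := by
  intro δ hδ x y
  obtain ⟨n, c, hc0, hcn, N, hN1, hNn, hsum⟩ := h δ hδ x y
  have hk0 : 0 < k := by omega
  have key : ∀ m : ℕ,
      (∑ j ∈ Finset.range m,
        dist (f (f^[j % k] (c (j / k)))) (f^[(j+1) % k] (c ((j+1) / k))))
      = ∑ i ∈ Finset.range (m / k), dist ((f^[k]) (c i)) (c (i + 1)) := by
    intro m
    induction m with
    | zero => simp
    | succ m ih =>
      rw [Finset.sum_range_succ, ih]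
      have hmodlt : m % k < k := Nat.mod_lt _ hk0
      have hmod1 : (m + 1) % k = (m % k + 1) % k := by
        conv_lhs => rw [Nat.add_mod, Nat.mod_eq_of_lt hk]
      by_cases hd : k ∣ m + 1
      · have h1 : (m + 1) / k = m / k + 1 := Nat.succ_div_of_dvd hd
        have h2 : (m + 1) % k = 0 := by obtain ⟨t, ht⟩ := hd; simp [ht, Nat.mul_mod_right]
        have h3 : m % k + 1 = k := by
          rcases lt_or_ge (m % k + 1) k with hlt | hge
          · rw [hmod1, Nat.mod_eq_of_lt hlt] at h2; omega
          · omega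
        rw [h1, h2, Finset.sum_range_succ]
        congr 1
        rw [← Function.iterate_succ_apply' f (m % k), Nat.succ_eq_add_one, h3]
        simp
      · have h1 : (m + 1) / k = m / k := by
          rw [Nat.succ_div, if_neg hd, add_zero]
        have h3 : m % k + 1 < k := by
          rcases lt_or_ge (m % k + 1) k with hlt | hge
          · exact hlt
          · exfalso
            have : m % k + 1 = k := by omega
            have : m + 1 = k * (m / k) + k := by
              conv_lhs => rw [← Nat.div_add_mod m k]
              omega
            exact hd ⟨m / k + 1, by rw [Nat.mul_add, Nat.mul_one]; omega⟩
        have h2 : (m + 1) % k = m % k + 1 := by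
          rw [hmod1, Nat.mod_eq_of_lt h3]
        rw [h1, h2, ← Function.iterate_succ_apply' f (m % k)]
        simp
  refine ⟨n * k, fun j => f^[j % k] (c (j / k)), ?_, ?_, N * k, ?_, ?_, ?_⟩
  · simpa using hc0
  · simp only [Nat.mul_mod_left, Nat.mul_div_cancel _ hk0]
    simpa using hcn
  · exact Nat.one_le_iff_ne_zero.mpr (by positivity)
  · exact Nat.mul_le_mul_right k hNn
  · intro m hm1 hm2
    rw [key m]
    set q := m / k with hq
    have hqN : N ≤ q := Nat.le_div_iff_mul_le hk0 |>.mpr hm1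
    have hqn : q ≤ n := (Nat.div_le_div_right hm2).trans_eq (Nat.mul_div_cancel _ hk0)
    have hq0 : 0 < q := by omega
    have hm0 : 0 < m := by
      have h2 : 1 * 2 ≤ N * k := Nat.mul_le_mul hN1 hk
      omega
    have hS := hsum q hqN hqn
    have hSnn : (0:ℝ) ≤ ∑ i ∈ Finset.range q, dist ((f^[k]) (c i)) (c (i + 1)) :=
      Finset.sum_nonneg fun _ _ => dist_nonneg
    have hqm : q ≤ m := Nat.div_le_self m k
    rw [div_lt_iff₀ (by exact_mod_cast hq0)] at hS
    rw [div_lt_iff₀ (by exact_mod_cast hm0)]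
    calc (∑ i ∈ Finset.range q, dist ((f^[k]) (c i)) (c (i + 1))) < δ * q := hS
      _ ≤ δ * m := by
          have : (q:ℝ) ≤ m := by exact_mod_cast hqm
          nlinarith
end

section
/- If f is a Lipschitz map that is average chain mixing, then f is totally average chain transitive, i.e., f^k is average chain transitive for every k ∈ ℕ. -/
open Filter Finset

lemma chain_iter_bound {X : Type*} [PseudoMetricSpace X] (f : X → X) (L : NNReal)
    (hf : LipschitzWith L f) (c : ℕ → X) (a : ℕ) :
    ∀ m : ℕ, dist (f^[m] (c a)) (c (a + m)) ≤
      (max (L:ℝ) 1) ^ m * ∑ i ∈ Finset.range m, dist (f (c (a + i))) (c (a + i + 1)) := by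
  intro m
  induction m with
  | zero => simp
  | succ m ih =>
    set M := max (L:ℝ) 1 with hMdef
    have hM1 : (1:ℝ) ≤ M := le_max_right _ _
    have hM0 : (0:ℝ) ≤ M := by linarith
    rw [Function.iterate_succ_apply']
    have h1 : dist (f (f^[m] (c a))) (c (a + (m+1))) ≤
        dist (f (f^[m] (c a))) (f (c (a + m))) + dist (f (c (a + m))) (c (a + m + 1)) := by
      have he : a + (m+1) = a + m + 1 := by ring
      rw [he]; exact dist_triangle _ _ _
    have h2 : dist (f (f^[m] (c a))) (f (c (a + m))) ≤ M * dist (f^[m] (c a)) (c (a + m)) :=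
      le_trans (hf.dist_le_mul _ _)
        (mul_le_mul_of_nonneg_right (le_max_left _ _) dist_nonneg)
    rw [Finset.sum_range_succ]
    have hsnn : 0 ≤ ∑ i ∈ Finset.range m, dist (f (c (a+i))) (c (a+i+1)) :=
      Finset.sum_nonneg fun _ _ => dist_nonneg
    have hpow1 : (1:ℝ) ≤ M ^ (m+1) := one_le_pow₀ hM1
    have hpow : M ^ (m+1) = M ^ m * M := pow_succ M m
    have henn : (0:ℝ) ≤ dist (f (c (a+m))) (c (a+m+1)) := dist_nonneg
    nlinarith [mul_le_mul_of_nonneg_left ih hM0, pow_nonneg hM0 m, dist_nonneg (x := f^[m] (c a)) (y := c (a+m))]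

lemma sum_range_mul_eq (g : ℕ → ℝ) (k : ℕ) :
    ∀ m : ℕ, ∑ j ∈ Finset.range m, ∑ i ∈ Finset.range k, g (j*k + i)
      = ∑ i ∈ Finset.range (m*k), g i := by
  intro m
  induction m with
  | zero => simp
  | succ m ih =>
    rw [Finset.sum_range_succ, ih, Nat.succ_mul, Finset.sum_range_add]


theorem stmt1 {X : Type*} [MetricSpace X] (f : X → X) (L : NNReal)
    (hf : LipschitzWith L f) (h : avgChainMixing f) :
    ∀ k : ℕ, 1 ≤ k → avgChainTransitive (f^[k]) := by
  intro k hk δ hδ x y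
  have hk0 : 0 < k := hk
  set M : ℝ := max (L:ℝ) 1 with hMdef
  have hM1 : (1:ℝ) ≤ M := le_max_right _ _
  have hMk0 : (0:ℝ) < M ^ k := pow_pos (by linarith) k
  have hCpos : (0:ℝ) < M ^ k * k := by positivity
  set δ' : ℝ := δ / (M ^ k * k) with hδ'def
  have hδ'pos : 0 < δ' := div_pos hδ hCpos
  obtain ⟨n₀, hn₀⟩ := h δ' hδ'pos x y
  refine ⟨n₀ + 1, ?_⟩
  set n : ℕ := n₀ + 1 with hndef
  have hnk : n * k ≥ n₀ := by
    calc n₀ ≤ n := Nat.le_succ n₀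
    _ = n * 1 := (Nat.mul_one n).symm
    _ ≤ n * k := Nat.mul_le_mul_left n hk
  obtain ⟨c, hc0, hcn, N, hN1, hNle, hNavg⟩ := hn₀ (n * k) hnk
  set N' : ℕ := (N + k - 1) / k with hN'def
  have hdm := Nat.div_add_mod (N + k - 1) k
  have hmod := Nat.mod_lt (N + k - 1) hk0
  rw [← hN'def] at hdm
  have hNN' : N ≤ N' * k := by
    rw [mul_comm]
    generalize k * N' = t at hdm ⊢
    generalize (N + k - 1) % k = r at hdm hmod
    omega
  have hN'1 : 1 ≤ N' := by
    rcases Nat.eq_zero_or_pos N' with h0 | hpos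
    · rw [h0, Nat.zero_mul] at hNN'; omega
    · exact hpos
  have hN'n : N' ≤ n := by
    have hlt : N + k - 1 < (n + 1) * k := by
      have hsm : (n + 1) * k = n * k + k := Nat.succ_mul n k
      omega
    have := (Nat.div_lt_iff_lt_mul hk0).mpr hlt
    rw [← hN'def] at this
    omega
  refine ⟨fun j => c (j * k), by simpa using hc0, hcn, N', hN'1, hN'n, ?_⟩
  intro m hm1 hm2
  have hm0 : 0 < m := lt_of_lt_of_le hN'1 hm1
  have hmk : N ≤ m * k := le_trans hNN' (Nat.mul_le_mul_right k hm1)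
  have hmkn : m * k ≤ n * k := Nat.mul_le_mul_right k hm2
  have hS := hNavg (m * k) hmk hmkn
  set e : ℕ → ℝ := fun i => dist (f (c i)) (c (i + 1)) with hedef
  set S : ℝ := ∑ i ∈ Finset.range (m * k), e i with hSdef
  have hSnn : 0 ≤ S := Finset.sum_nonneg fun _ _ => dist_nonneg
  have hmk0 : 0 < m * k := Nat.mul_pos hm0 hk0
  have hmkR : (0:ℝ) < ((m * k : ℕ) : ℝ) := by exact_mod_cast hmk0
  have hSlt : S < δ' * (m * k) := by
    have := (div_lt_iff₀ hmkR).mp hS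
    push_cast at this ⊢
    linarith
  have hterm : ∀ j ∈ Finset.range m,
      dist (f^[k] (c (j * k))) (c ((j + 1) * k)) ≤
        M ^ k * ∑ i ∈ Finset.range k, e (j * k + i) := by
    intro j _
    have := chain_iter_bound f L hf c (j * k) k
    have heq : (j + 1) * k = j * k + k := by ring
    rw [heq]
    simpa [hedef] using this
  have hsum : ∑ j ∈ Finset.range m, dist (f^[k] (c (j * k))) (c ((j + 1) * k)) ≤ M ^ k * S := by
    calc ∑ j ∈ Finset.range m, dist (f^[k] (c (j * k))) (c ((j + 1) * k))
        ≤ ∑ j ∈ Finset.range m, M ^ k * ∑ i ∈ Finset.range k, e (j * k + i) :=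
          Finset.sum_le_sum hterm
      _ = M ^ k * ∑ j ∈ Finset.range m, ∑ i ∈ Finset.range k, e (j * k + i) :=
          (Finset.mul_sum _ _ _).symm
      _ = M ^ k * S := by rw [sum_range_mul_eq e k m]
  have hmR : (0:ℝ) < (m : ℝ) := by exact_mod_cast hm0
  rw [div_lt_iff₀ hmR]
  have hδeq : δ' * (M ^ k * k) = δ := div_mul_cancel₀ δ (ne_of_gt hCpos)
  have hfinal : M ^ k * S < δ * m := by
    have h1 : M ^ k * S < M ^ k * (δ' * (m * k)) :=
      (mul_lt_mul_iff_right₀ hMk0).mpr hSlt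
    have h2 : M ^ k * (δ' * (m * k)) = δ * m := by
      push_cast
      rw [← hδeq]; ring
    linarith
  linarith
end

section
/- If f is average chain mixing, then f × f is average chain transitive, where X × X carries the sup metric d*((x₁,y₁),(x₂,y₂)) = max{d(x₁,x₂), d(y₁,y₂)}. -/
open Filter Finset

theorem stmt2 {X : Type*} [MetricSpace X] (f : X → X) (hf : Continuous f)
    (h : avgChainMixing f) :
    avgChainTransitive (Prod.map f f : X × X → X × X) := by
  intro δ hδ p q
  obtain ⟨n₁, h1⟩ := h (δ / 2) (by linarith) p.1 q.1
  obtain ⟨n₂, h2⟩ := h (δ / 2) (by linarith) p.2 q.2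
  set n := max n₁ n₂ with hn
  obtain ⟨c, hc0, hcn, N, hN1, hNn, hc⟩ := h1 n (le_max_left _ _)
  obtain ⟨c', hc'0, hc'n, N', hN'1, hN'n, hc'⟩ := h2 n (le_max_right _ _)
  refine ⟨n, fun i => (c i, c' i), by simp [hc0, hc'0], by simp [hcn, hc'n],
    max N N', le_trans hN1 (le_max_left _ _), max_le hNn hN'n, ?_⟩
  intro m hm1 hm2
  have hm : (0:ℝ) < m := by
    have : 1 ≤ m := le_trans hN1 (le_trans (le_max_left _ _) hm1)
    exact_mod_cast this
  have key : (∑ i ∈ Finset.range m,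
      dist (Prod.map f f (c i, c' i)) (c (i + 1), c' (i + 1))) ≤
      (∑ i ∈ Finset.range m, dist (f (c i)) (c (i + 1))) +
      (∑ i ∈ Finset.range m, dist (f (c' i)) (c' (i + 1))) := by
    rw [← Finset.sum_add_distrib]
    apply Finset.sum_le_sum
    intro i _
    rw [Prod.dist_eq]
    exact max_le (le_add_of_nonneg_right dist_nonneg)
      (le_add_of_nonneg_left dist_nonneg)
  have hA := hc m (le_trans (le_max_left _ _) hm1) hm2
  have hB := hc' m (le_trans (le_max_right _ _) hm1) hm2
  calc (∑ i ∈ Finset.range m,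
      dist (Prod.map f f (c i, c' i)) (c (i + 1), c' (i + 1))) / m
      ≤ ((∑ i ∈ Finset.range m, dist (f (c i)) (c (i + 1))) +
        (∑ i ∈ Finset.range m, dist (f (c' i)) (c' (i + 1)))) / m :=
        div_le_div_of_nonneg_right key hm.le |>.trans_eq rfl
    _ = (∑ i ∈ Finset.range m, dist (f (c i)) (c (i + 1))) / m +
        (∑ i ∈ Finset.range m, dist (f (c' i)) (c' (i + 1))) / m := add_div _ _ _
    _ < δ / 2 + δ / 2 := add_lt_add hA hB
    _ = δ := by ring
end

section
/- If f is totally average chain transitive, then f × f is average chain transitive with respect to the sup metric on X × X. -/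
open Filter Finset

section AuxGood
variable {X : Type*} [PseudoMetricSpace X]

/-- A chain whose total sum of jumps is `< δ * n`. -/
def goodChain (f : X → X) (δ : ℝ) (x y : X) (n : ℕ) : Prop :=
  ∃ c : ℕ → X, c 0 = x ∧ c n = y ∧
    (∑ i ∈ Finset.range n, dist (f (c i)) (c (i + 1))) < δ * n

lemma avgChain_good {f : X → X} {δ : ℝ} {x y : X} {n : ℕ}
    (h : avgChain f δ x y n) : 1 ≤ n ∧ goodChain f δ x y n := by
  obtain ⟨c, h0, hn, N, hN1, hNn, hm⟩ := h
  have hn1 : 1 ≤ n := hN1.trans hNn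
  have hnpos : (0:ℝ) < n := by exact_mod_cast hn1
  have := hm n hNn le_rfl
  exact ⟨hn1, c, h0, hn, (div_lt_iff₀ hnpos).mp this⟩

lemma goodChain_pos {f : X → X} {δ : ℝ} {x y : X} {n : ℕ}
    (hδ : 0 < δ) (h : goodChain f δ x y n) : 1 ≤ n := by
  obtain ⟨c, -, -, hs⟩ := h
  by_contra hn
  have : n = 0 := by omega
  subst this
  norm_num at hs

lemma goodChain_iterate {f : X → X} {δ : ℝ} {x y : X} {k m : ℕ} (hk : 1 ≤ k)
    (hδ : 0 < δ) (hc : goodChain (f^[k]) δ x y m) : goodChain f δ x y (k * m) := by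
  obtain ⟨c, h0, hm, hs⟩ := hc
  have hk0 : k ≠ 0 := by omega
  set c' : ℕ → X := fun j => f^[j % k] (c (j / k)) with hc'
  have key : ∀ M : ℕ, (∑ j ∈ Finset.range (k * M), dist (f (c' j)) (c' (j + 1)))
      = ∑ q ∈ Finset.range M, dist (f^[k] (c q)) (c (q + 1)) := by
    intro M
    induction M with
    | zero => simp
    | succ M ih =>
      rw [Nat.mul_succ, Finset.sum_range_add, ih, Finset.sum_range_succ]
      congr 1
      have block : ∀ i, i < k →
          dist (f (c' (k * M + i))) (c' (k * M + i + 1))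
            = if i = k - 1 then dist (f^[k] (c M)) (c (M + 1)) else 0 := by
        intro i hi
        have e1 : c' (k * M + i) = f^[i] (c M) := by
          simp only [hc']
          rw [Nat.mul_add_mod, Nat.mod_eq_of_lt hi, Nat.mul_add_div (by omega),
            Nat.div_eq_of_lt hi, Nat.add_zero]
        by_cases hik : i = k - 1
        · have e2 : c' (k * M + i + 1) = c (M + 1) := by
            have : k * M + i + 1 = k * (M + 1) := by rw [Nat.mul_succ]; omega
            rw [this]
            simp only [hc', Nat.mul_mod_right, Nat.mul_div_cancel_left _ (by omega : 0 < k)]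
            simp
          rw [e1, e2, hik]
          have hkk : k = (k - 1) + 1 := by omega
          have hfk : f^[k] (c M) = f (f^[k - 1] (c M)) := by
            conv_lhs => rw [hkk]
            rw [Function.iterate_succ_apply']
          rw [if_pos rfl, hfk]
        · have hik' : i + 1 < k := by omega
          have e2 : c' (k * M + i + 1) = f^[i + 1] (c M) := by
            simp only [hc']
            have h1 : k * M + i + 1 = k * M + (i + 1) := by omega
            rw [h1, Nat.mul_add_mod, Nat.mod_eq_of_lt hik', Nat.mul_add_div (by omega),
              Nat.div_eq_of_lt hik']
            norm_num
          rw [e1, e2, if_neg hik, Function.iterate_succ_apply', dist_self]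
      rw [Finset.sum_congr rfl (fun i hi => block i (Finset.mem_range.mp hi))]
      rw [Finset.sum_ite_eq' (Finset.range k) (k - 1)]
      simp [Finset.mem_range, Nat.sub_lt (by omega : 0 < k)]
  refine ⟨c', ?_, ?_, ?_⟩
  · simp [hc', Nat.zero_div, h0]
  · simp only [hc', Nat.mul_mod_right, Nat.mul_div_cancel_left _ (by omega : 0 < k)]
    simpa using hm
  · rw [key]
    calc (∑ q ∈ Finset.range m, dist (f^[k] (c q)) (c (q + 1))) < δ * m := hs
      _ ≤ δ * ((k * m : ℕ) : ℝ) := by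
        apply mul_le_mul_of_nonneg_left _ hδ.le
        exact_mod_cast Nat.le_mul_of_pos_left m (by omega : 0 < k)

lemma goodChain_concat {f : X → X} {δ : ℝ} {x y z : X} {n₁ n₂ : ℕ} (hn1 : 1 ≤ n₁)
    (h1 : goodChain f δ x y n₁) (h2 : goodChain f δ y z n₂) :
    goodChain f δ x z (n₁ + n₂) := by
  obtain ⟨c, c0, cn, cs⟩ := h1
  obtain ⟨d, d0, dn, ds⟩ := h2
  refine ⟨fun j => if j < n₁ then c j else d (j - n₁), ?_, ?_, ?_⟩
  · show (if 0 < n₁ then c 0 else d (0 - n₁)) = x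
    rw [if_pos (by omega : 0 < n₁)]; exact c0
  · have : ¬ (n₁ + n₂ < n₁) := by omega
    simp [this, dn]
  · rw [Finset.sum_range_add]
    have e1 : (∑ i ∈ Finset.range n₁,
        dist (f (if i < n₁ then c i else d (i - n₁)))
          (if i + 1 < n₁ then c (i + 1) else d (i + 1 - n₁)))
        = ∑ i ∈ Finset.range n₁, dist (f (c i)) (c (i + 1)) := by
      apply Finset.sum_congr rfl
      intro i hi
      have hi' : i < n₁ := Finset.mem_range.mp hi
      rw [if_pos hi']
      by_cases h2' : i + 1 < n₁
      · rw [if_pos h2']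
      · have : i + 1 = n₁ := by omega
        rw [if_neg h2', this, Nat.sub_self, d0, cn]
    have e2 : (∑ i ∈ Finset.range n₂,
        dist (f (if n₁ + i < n₁ then c (n₁ + i) else d (n₁ + i - n₁)))
          (if n₁ + i + 1 < n₁ then c (n₁ + i + 1) else d (n₁ + i + 1 - n₁)))
        = ∑ i ∈ Finset.range n₂, dist (f (d i)) (d (i + 1)) := by
      apply Finset.sum_congr rfl
      intro i _
      have h3 : ¬ (n₁ + i < n₁) := by omega
      have h4 : ¬ (n₁ + i + 1 < n₁) := by omega
      have e5 : n₁ + i - n₁ = i := by omega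
      have e6 : n₁ + i + 1 - n₁ = i + 1 := by omega
      rw [if_neg h3, if_neg h4, e5, e6]
    rw [e1, e2]
    push_cast
    linarith

lemma goodChain_loops {f : X → X} {δ : ℝ} {x y : X} {n p : ℕ} (hn : 1 ≤ n)
    (h : goodChain f δ x y n) (hl : goodChain f δ y y p) :
    ∀ i : ℕ, goodChain f δ x y (n + i * p) := by
  intro i
  induction i with
  | zero => simpa using h
  | succ i ih =>
    have := goodChain_concat (by omega : 1 ≤ n + i * p) ih hl
    have heq : n + i * p + p = n + (i + 1) * p := by ring
    rwa [heq] at this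

end AuxGood

theorem stmt3 {X : Type*} [MetricSpace X] (f : X → X) (hf : Continuous f)
    (h : ∀ k : ℕ, 1 ≤ k → avgChainTransitive (f^[k])) :
    avgChainTransitive (Prod.map f f : X × X → X × X) := by
  rintro δ hδ ⟨x₁, y₁⟩ ⟨x₂, y₂⟩
  have hδ2 : (0:ℝ) < δ / 2 := by linarith
  -- a loop at x₂ for f itself
  obtain ⟨r, hr⟩ := h 1 le_rfl (δ / 2) hδ2 x₂ x₂
  obtain ⟨hr1, hrg⟩ := avgChain_good hr
  rw [Function.iterate_one] at hrg
  -- chains for f^[r]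
  obtain ⟨α, hα⟩ := h r hr1 (δ / 2) hδ2 x₁ x₂
  obtain ⟨hα1, hαg⟩ := avgChain_good hα
  obtain ⟨β, hβ⟩ := h r hr1 (δ / 2) hδ2 y₁ y₂
  obtain ⟨hβ1, hβg⟩ := avgChain_good hβ
  obtain ⟨w, hw⟩ := h r hr1 (δ / 2) hδ2 y₂ y₂
  obtain ⟨hw1, hwg⟩ := avgChain_good hw
  obtain ⟨w', rfl⟩ : ∃ w', w = w' + 1 := ⟨w - 1, by omega⟩
  -- convert to f-chains
  have hA : goodChain f (δ / 2) x₁ x₂ (r * α) := goodChain_iterate hr1 hδ2 hαg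
  have hB : goodChain f (δ / 2) y₁ y₂ (r * β) := goodChain_iterate hr1 hδ2 hβg
  have hW : goodChain f (δ / 2) y₂ y₂ (r * (w' + 1)) := goodChain_iterate hr1 hδ2 hwg
  -- pad: x-chain of length r*α + (β + α*w') * r, y-chain of length r*β + α * (r*(w'+1))
  have hX : goodChain f (δ / 2) x₁ x₂ (r * α + (β + α * w') * r) :=
    goodChain_loops (Nat.mul_pos (by omega) (by omega)) hA hrg (β + α * w')
  have hY : goodChain f (δ / 2) y₁ y₂ (r * β + α * (r * (w' + 1))) :=
    goodChain_loops (Nat.mul_pos (by omega) (by omega)) hB hW α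
  set n : ℕ := r * (α + β + α * w') with hn
  have hXn : goodChain f (δ / 2) x₁ x₂ n := by
    have : r * α + (β + α * w') * r = n := by rw [hn]; ring
    rwa [this] at hX
  have hYn : goodChain f (δ / 2) y₁ y₂ n := by
    have : r * β + α * (r * (w' + 1)) = n := by rw [hn]; ring
    rwa [this] at hY
  have hn1 : 1 ≤ n := by
    have := goodChain_pos hδ2 hXn
    omega
  obtain ⟨cx, cx0, cxn, cxs⟩ := hXn
  obtain ⟨cy, cy0, cyn, cys⟩ := hYn
  refine ⟨n, fun j => (cx j, cy j), by simp [cx0, cy0], by simp [cxn, cyn],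
    n, hn1, le_rfl, ?_⟩
  intro m hm1 hm2
  have hm : m = n := le_antisymm hm2 hm1
  rw [hm]
  have hnpos : (0:ℝ) < (n : ℝ) := by exact_mod_cast hn1
  rw [div_lt_iff₀ hnpos]
  have hsum : (∑ i ∈ Finset.range n,
      dist (Prod.map f f (cx i, cy i)) (cx (i + 1), cy (i + 1)))
      ≤ (∑ i ∈ Finset.range n, dist (f (cx i)) (cx (i + 1)))
        + ∑ i ∈ Finset.range n, dist (f (cy i)) (cy (i + 1)) := by
    rw [← Finset.sum_add_distrib]
    apply Finset.sum_le_sum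
    intro i _
    rw [Prod.map_apply, Prod.dist_eq]
    exact max_le_add_of_nonneg dist_nonneg dist_nonneg
  calc (∑ i ∈ Finset.range n,
      dist (Prod.map f f (cx i, cy i)) (cx (i + 1), cy (i + 1)))
      ≤ _ + _ := hsum
    _ < δ / 2 * n + δ / 2 * n := add_lt_add cxs cys
    _ = δ * n := by ring
end

section
/- The constant map f(x) = a on a metric space X (with at least two points) is average chain mixing, but it is not chain transitive if X contains a point y ≠ a. -/
open Filter Finset

theorem stmt6 {X : Type*} [MetricSpace X] (a y : X) (hy : y ≠ a) :
    avgChainMixing (fun _ : X => a) ∧ ¬ chainTransitive (fun _ : X => a) := by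
  classical
  constructor
  · intro δ hδ x y
    refine ⟨⌈dist a y / δ⌉₊ + 1, fun n hn => ?_⟩
    have hn1 : 1 ≤ n := le_trans (Nat.le_add_left 1 _) hn
    have hn0 : n ≠ 0 := Nat.one_le_iff_ne_zero.mp hn1
    refine ⟨fun i => if i = 0 then x else if i = n then y else a, by simp, by simp [hn0],
      1, le_refl 1, hn1, ?_⟩
    intro m hm hmn
    rcases lt_or_eq_of_le hmn with hlt | rfl
    · have hz : (∑ i ∈ Finset.range m,
          dist ((fun _ : X => a) (if i = 0 then x else if i = n then y else a))
            (if i + 1 = 0 then x else if i + 1 = n then y else a)) = 0 := by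
        apply Finset.sum_eq_zero
        intro i hi
        have hi' : i < m := Finset.mem_range.mp hi
        have h1 : i + 1 ≠ 0 := Nat.succ_ne_zero i
        have h2 : i + 1 ≠ n := by omega
        simp [h1, h2]
      rw [hz]
      simpa using hδ
    · obtain ⟨k, rfl⟩ : ∃ k, m = k + 1 := ⟨m - 1, by omega⟩
      have hz : (∑ i ∈ Finset.range k,
          dist ((fun _ : X => a) (if i = 0 then x else if i = (k+1) then y else a))
            (if i + 1 = 0 then x else if i + 1 = (k+1) then y else a)) = 0 := by
        apply Finset.sum_eq_zero
        intro i hi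
        have hi' : i < k := Finset.mem_range.mp hi
        have h1 : i + 1 ≠ 0 := Nat.succ_ne_zero i
        have h2 : i + 1 ≠ k + 1 := by omega
        simp [h1, h2, hi'.ne]
      rw [Finset.sum_range_succ, hz]
      simp only [zero_add]
      have hk1 : (k + 1 : ℕ) ≠ 0 := Nat.succ_ne_zero k
      simp only [hk1, if_false]
      have hcast : (0:ℝ) < (k + 1 : ℕ) := by positivity
      rw [div_lt_iff₀ hcast]
      have hceil : dist a y / δ ≤ (⌈dist a y / δ⌉₊ : ℝ) := Nat.le_ceil _
      have hlt : (⌈dist a y / δ⌉₊ : ℝ) < ((k + 1 : ℕ) : ℝ) := by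
        exact_mod_cast Nat.lt_of_lt_of_le (Nat.lt_succ_self _) hn
      have : dist a y / δ < ((k + 1 : ℕ) : ℝ) := lt_of_le_of_lt hceil hlt
      calc dist a y = dist a y / δ * δ := by field_simp
        _ < ((k + 1 : ℕ) : ℝ) * δ := by
            exact mul_lt_mul_of_pos_right this hδ
        _ = δ * ((k + 1 : ℕ) : ℝ) := mul_comm _ _
  · intro h
    obtain ⟨n, hn, c, hc0, hcn, hchain⟩ := h (dist y a) (dist_pos.mpr hy) a y
    have := hchain (n - 1) (Nat.sub_lt hn one_pos)
    have he : n - 1 + 1 = n := by omega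
    rw [he] at this
    rw [hcn] at this
    simp only at this
    rw [dist_comm] at this
    exact lt_irrefl _ this
end

section
/- Let X = {1, 2, ..., 2k} with the discrete metric and f(i) = (i+2) mod 2k (interpreted as a map of X to itself). Then f is average chain mixing but not chain transitive. -/
open Filter Finset

open scoped Classical in
lemma ddist {α : Type*} (a b : α) :
    @dist α ((discMetric α).toPseudoMetricSpace).toDist a b = if a = b then 0 else 1 := rfl

lemma ddist_le {α : Type*} (a b : α) :
    @dist α ((discMetric α).toPseudoMetricSpace).toDist a b ≤ 1 := by
  classical
  rw [ddist]; split <;> norm_num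

lemma ddist_eq {α : Type*} {a b : α}
    (h : @dist α ((discMetric α).toPseudoMetricSpace).toDist a b < 1/2) : a = b := by
  classical
  rw [ddist] at h
  by_contra hne
  rw [if_neg hne] at h
  norm_num at h

theorem stmt7 (k : ℕ) (hk : 1 ≤ k) :
    @avgChainMixing (ZMod (2 * k)) (discMetric (ZMod (2 * k))).toPseudoMetricSpace
        (fun i : ZMod (2 * k) => i + 2) ∧
    ¬ @chainTransitive (ZMod (2 * k)) (discMetric (ZMod (2 * k))).toPseudoMetricSpace
        (fun i : ZMod (2 * k) => i + 2) := by
  letI := (discMetric (ZMod (2*k))).toPseudoMetricSpace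
  constructor
  · -- avgChainMixing
    intro δ hδ x y
    obtain ⟨n₀, hn₀⟩ := exists_nat_gt (1/δ)
    refine ⟨max n₀ 1, ?_⟩
    intro n hn
    have hn1 : 1 ≤ n := le_trans (le_max_right _ _) hn
    have hnpos : (0:ℝ) < n := by exact_mod_cast hn1
    have hnδ : 1/(n:ℝ) < δ := by
      have h1 : (1/δ : ℝ) < n := lt_of_lt_of_le hn₀ (by exact_mod_cast le_trans (le_max_left _ _) hn)
      rw [div_lt_iff₀ hnpos]
      rw [div_lt_iff₀ hδ] at h1
      nlinarith
    refine ⟨fun i => if i = n then y else x + 2 * (i : ZMod (2*k)), ?_, ?_, n, hn1, le_refl n, ?_⟩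
    · simp [(Nat.one_le_iff_ne_zero.mp hn1 : n ≠ 0).symm]
    · simp
    · intro m hm hm'
      have hmn : m = n := le_antisymm hm' hm
      subst hmn
      refine lt_of_le_of_lt ?_ hnδ
      gcongr
      obtain ⟨p, rfl⟩ : ∃ p, m = p + 1 := ⟨m - 1, (Nat.succ_pred_eq_of_pos hn1).symm⟩
      rw [Finset.sum_range_succ]
      have hz : ∀ i ∈ Finset.range p,
          dist ((fun i : ZMod (2*k) => i + 2)
            ((fun i : ℕ => if i = p+1 then y else x + 2 * (i : ZMod (2*k))) i))
            ((fun i : ℕ => if i = p+1 then y else x + 2 * (i : ZMod (2*k))) (i+1)) = 0 := by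
        intro i hi
        rw [Finset.mem_range] at hi
        have h1 : i ≠ p + 1 := by omega
        have h2 : i + 1 ≠ p + 1 := by omega
        simp only [if_neg h1, if_neg h2]
        rw [ddist, if_pos]
        push_cast
        ring
      rw [Finset.sum_congr rfl hz]
      simp only [Finset.sum_const_zero, zero_add]
      exact ddist_le _ _
  · -- not chainTransitive
    intro hct
    obtain ⟨n, hnpos, c, hc0, hcn, hchain⟩ := hct (1/2) (by norm_num) 0 1
    have key : ∀ i ≤ n, c i = ((2*i : ℕ) : ZMod (2*k)) := by
      intro i
      induction i with
      | zero => intro _; simp [hc0]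
      | succ j ih =>
        intro hj
        have hstep := hchain j (by omega)
        have := ddist_eq hstep
        rw [← this, ih (by omega)]
        push_cast
        ring
    have h1 : ((2*n : ℕ) : ZMod (2*k)) = 1 := by rw [← key n le_rfl, hcn]
    have h2 : ((2*n : ℕ) : ZMod 2) = 1 := by
      have := congrArg (ZMod.castHom (⟨k, rfl⟩ : (2:ℕ) ∣ 2*k) (ZMod 2)) h1
      rwa [map_natCast, map_one] at this
    rw [Nat.cast_mul, ZMod.natCast_self, zero_mul] at h2
    exact absurd h2 (by decide)
end

section
/- If f has the almost average shadowing property, then f^k has the almost average shadowing property for every integer k > 1. -/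
open Filter Finset

section Stmt8Aux

lemma limsup_eq_zero_of_unbounded {v : ℕ → ℝ}
    (h : ¬ Filter.IsBoundedUnder (· ≤ ·) Filter.atTop v) :
    Filter.atTop.limsup v = 0 := by
  have hs : {a : ℝ | ∀ᶠ n in Filter.atTop, v n ≤ a} = ∅ := by
    ext a
    simp only [Set.mem_setOf_eq, Set.mem_empty_iff_false, iff_false]
    intro ha
    exact h ⟨a, by simpa [Filter.eventually_map] using ha⟩
  rw [Filter.limsup_eq, hs, Real.sInf_empty]

lemma bddBelow_evset {v : ℕ → ℝ} (h0 : ∀ n, 0 ≤ v n) :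
    BddBelow {a : ℝ | ∀ᶠ n in Filter.atTop, v n ≤ a} := by
  refine ⟨0, fun a ha => ?_⟩
  obtain ⟨n, hn⟩ := ha.exists
  exact le_trans (h0 n) hn

lemma ev_bound_of_limsup_lt {v : ℕ → ℝ} (h0 : ∀ n, 0 ≤ v n)
    (hb : Filter.IsBoundedUnder (· ≤ ·) Filter.atTop v) {q : ℝ}
    (hq : Filter.atTop.limsup v < q) :
    ∃ α : ℝ, 0 ≤ α ∧ α < q ∧ ∃ N : ℕ, ∀ n ≥ N, v n ≤ α := by
  obtain ⟨b, hbb⟩ := hb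
  have hb' : ∀ᶠ n in Filter.atTop, v n ≤ b := by simpa [Filter.eventually_map] using hbb
  have hne : {a : ℝ | ∀ᶠ n in Filter.atTop, v n ≤ a}.Nonempty := ⟨b, hb'⟩
  rw [Filter.limsup_eq] at hq
  obtain ⟨α, hαmem, hαq⟩ := (csInf_lt_iff (bddBelow_evset h0) hne).mp hq
  obtain ⟨n0, hn0⟩ := hαmem.exists
  obtain ⟨N, hN⟩ := Filter.eventually_atTop.mp hαmem
  exact ⟨α, le_trans (h0 n0) hn0, hαq, N, hN⟩

lemma limsup_le_of_ev {v : ℕ → ℝ} (h0 : ∀ n, 0 ≤ v n) {α : ℝ} (N : ℕ)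
    (hα : ∀ n ≥ N, v n ≤ α) : Filter.atTop.limsup v ≤ α := by
  rw [Filter.limsup_eq]
  exact csInf_le (bddBelow_evset h0) (Filter.eventually_atTop.mpr ⟨N, hα⟩)

lemma lin_of_bdd {u : ℕ → ℝ}
    (hb : Filter.IsBoundedUnder (· ≤ ·) Filter.atTop
      (fun n : ℕ => (∑ i ∈ Finset.range n, u i) / n)) :
    ∃ M : ℝ, 0 ≤ M ∧ ∃ N : ℕ, ∀ n ≥ N, ∑ i ∈ Finset.range n, u i ≤ M * n := by
  obtain ⟨b, hbb⟩ := hb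
  have hb' : ∀ᶠ n in Filter.atTop, (∑ i ∈ Finset.range n, u i) / n ≤ b := by
    simpa [Filter.eventually_map] using hbb
  obtain ⟨N, hN⟩ := Filter.eventually_atTop.mp hb'
  refine ⟨max b 0, le_max_right _ _, max N 1, fun n hn => ?_⟩
  have hn1 : 1 ≤ n := le_trans (le_max_right _ _) hn
  have hnpos : (0:ℝ) < n := by exact_mod_cast hn1
  have := hN n (le_trans (le_max_left _ _) hn)
  have hsum : ∑ i ∈ Finset.range n, u i ≤ b * n := by
    rw [div_le_iff₀ hnpos] at this; exact this
  calc ∑ i ∈ Finset.range n, u i ≤ b * n := hsum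
    _ ≤ max b 0 * n := by
        apply mul_le_mul_of_nonneg_right (le_max_left _ _) (le_of_lt hnpos)

lemma bdd_of_lin {u : ℕ → ℝ} {M : ℝ} {N : ℕ}
    (hs : ∀ n ≥ N, ∑ i ∈ Finset.range n, u i ≤ M * n) :
    Filter.IsBoundedUnder (· ≤ ·) Filter.atTop
      (fun n : ℕ => (∑ i ∈ Finset.range n, u i) / n) := by
  refine ⟨max M 0, ?_⟩
  rw [Filter.eventually_map]
  rw [Filter.eventually_atTop]
  refine ⟨max N 1, fun n hn => ?_⟩
  have hn1 : 1 ≤ n := le_trans (le_max_right _ _) hn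
  have hnpos : (0:ℝ) < n := by exact_mod_cast hn1
  show (∑ i ∈ Finset.range n, u i) / n ≤ max M 0
  rw [div_le_iff₀ hnpos]
  calc ∑ i ∈ Finset.range n, u i ≤ M * n := hs n (le_trans (le_max_left _ _) hn)
    _ ≤ max M 0 * n := mul_le_mul_of_nonneg_right (le_max_left _ _) (le_of_lt hnpos)

lemma sum_comp_le {ι κ : Type*} [DecidableEq κ] (u : κ → ℝ) (hu : ∀ i, 0 ≤ u i)
    (σ : ι → κ) (s : Finset ι) (t : Finset κ)
    (hinj : ∀ a ∈ s, ∀ b ∈ s, σ a = σ b → a = b)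
    (hmem : ∀ j ∈ s, σ j ∈ t) :
    ∑ j ∈ s, u (σ j) ≤ ∑ i ∈ t, u i := by
  rw [← Finset.sum_image hinj]
  apply Finset.sum_le_sum_of_subset_of_nonneg
  · intro i hi
    obtain ⟨j, hj, rfl⟩ := Finset.mem_image.mp hi
    exact hmem j hj
  · intro i _ _; exact hu i

lemma stmt8_idx {k : ℕ} (hk0 : 0 < k) (q s : ℕ) (hs : s < k) :
    (s + k * q) % k = s ∧ (s + k * q) / k = q := by
  constructor
  · rw [Nat.add_mul_mod_self_left, Nat.mod_eq_of_lt hs]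
  · rw [Nat.add_mul_div_left _ _ hk0, Nat.div_eq_of_lt hs, Nat.zero_add]

lemma exists_unbounded_residue {k : ℕ} (hk0 : 0 < k) (b : ℕ → ℝ) (hb0 : ∀ j, 0 ≤ b j)
    (hub : ¬ Filter.IsBoundedUnder (· ≤ ·) Filter.atTop
      (fun n : ℕ => (∑ j ∈ Finset.range n, b j) / n)) :
    ∃ r, r < k ∧ ¬ Filter.IsBoundedUnder (· ≤ ·) Filter.atTop
      (fun n : ℕ => (∑ i ∈ Finset.range n, b (r + k * i)) / n) := by
  by_contra hcon
  push_neg at hcon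
  have H : ∀ r : ℕ, ∃ M : ℝ, 0 ≤ M ∧ ∃ N : ℕ, ∀ n ≥ N,
      (if r < k then ∑ i ∈ Finset.range n, b (r + k * i) else 0) ≤ M * n := by
    intro r
    by_cases hr : r < k
    · obtain ⟨M, hM0, N, hN⟩ := lin_of_bdd (hcon r hr)
      exact ⟨M, hM0, N, fun n hn => by simpa [hr] using hN n hn⟩
    · refine ⟨0, le_rfl, 0, fun n _ => by simp [hr]⟩
  choose M hM0 N hN using H
  apply hub
  apply bdd_of_lin (M := ∑ r ∈ Finset.range k, M r) (N := (Finset.range k).sup N)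
  intro n hn
  have key : ∑ j ∈ Finset.range n, b j ≤ ∑ r ∈ Finset.range k, ∑ i ∈ Finset.range n, b (r + k * i) := by
    have e1 : ∑ j ∈ Finset.range n, b j
        = ∑ j ∈ Finset.range n, (fun p : ℕ × ℕ => b (p.1 + k * p.2)) (j % k, j / k) := by
      apply Finset.sum_congr rfl
      intro j _
      simp only
      rw [Nat.mod_add_div]
    rw [e1]
    have e2 : ∑ p ∈ (Finset.range k) ×ˢ (Finset.range n), (fun p : ℕ × ℕ => b (p.1 + k * p.2)) p
        = ∑ r ∈ Finset.range k, ∑ i ∈ Finset.range n, b (r + k * i) := by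
      rw [Finset.sum_product]
    rw [← e2]
    refine sum_comp_le (fun p : ℕ × ℕ => b (p.1 + k * p.2)) (fun p => hb0 _)
      (fun j => (j % k, j / k)) (Finset.range n) ((Finset.range k) ×ˢ (Finset.range n)) ?inj ?mem
    case inj =>
      intro a _ c _ hac
      have h1 : a % k = c % k := congrArg Prod.fst hac
      have h2 : a / k = c / k := congrArg Prod.snd hac
      have ha := Nat.div_add_mod a k
      have hc := Nat.div_add_mod c k
      rw [h1, h2] at ha
      rw [← ha]; exact hc
    case mem =>
      intro j hj
      rw [Finset.mem_product]
      refine ⟨Finset.mem_range.mpr (Nat.mod_lt _ hk0), Finset.mem_range.mpr ?_⟩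
      exact lt_of_le_of_lt (Nat.div_le_self _ _) (Finset.mem_range.mp hj)
  calc ∑ j ∈ Finset.range n, b j
      ≤ ∑ r ∈ Finset.range k, ∑ i ∈ Finset.range n, b (r + k * i) := key
    _ ≤ ∑ r ∈ Finset.range k, M r * n := by
        apply Finset.sum_le_sum
        intro r hr
        have hrk : r < k := Finset.mem_range.mp hr
        have := hN r n (le_trans (Finset.le_sup hr) hn)
        simpa [hrk] using this
    _ = (∑ r ∈ Finset.range k, M r) * n := by rw [Finset.sum_mul]

lemma win_of_bounded {X : Type*} [MetricSpace X] (f : X → X) {k : ℕ} (hk0 : 0 < k)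
    (x : ℕ → X) {ε' : ℝ} (w : ℕ → X) (hw0 : ∀ i : ℕ, w (k * i) = x i) (z : X)
    (hz : Filter.atTop.limsup
      (fun n : ℕ => (∑ j ∈ Finset.range n, dist (f^[j] z) (w j)) / n) < ε')
    (hB : Filter.IsBoundedUnder (· ≤ ·) Filter.atTop
      (fun n : ℕ => (∑ j ∈ Finset.range n, dist (f^[j] z) (w j)) / n)) :
    Filter.atTop.limsup
      (fun n : ℕ => (∑ i ∈ Finset.range n, dist ((f^[k])^[i] z) (x i)) / n) < k * ε' := by
  have hbnn : ∀ n : ℕ, 0 ≤ (∑ j ∈ Finset.range n, dist (f^[j] z) (w j)) / n :=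
    fun n => div_nonneg (Finset.sum_nonneg fun i _ => dist_nonneg) (Nat.cast_nonneg n)
  have hcnn : ∀ n : ℕ, 0 ≤ (∑ i ∈ Finset.range n, dist ((f^[k])^[i] z) (x i)) / n :=
    fun n => div_nonneg (Finset.sum_nonneg fun i _ => dist_nonneg) (Nat.cast_nonneg n)
  obtain ⟨α, hα0, hαε, N, hN⟩ := ev_bound_of_limsup_lt hbnn hB hz
  have key : ∀ n ≥ max N 1,
      (∑ i ∈ Finset.range n, dist ((f^[k])^[i] z) (x i)) / n ≤ α * k := by
    intro n hn
    have hn1 : 1 ≤ n := le_trans (le_max_right _ _) hn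
    have hnN : N ≤ n := le_trans (le_max_left _ _) hn
    have hnpos : (0:ℝ) < n := by exact_mod_cast hn1
    have e1 : ∑ i ∈ Finset.range n, dist ((f^[k])^[i] z) (x i)
        = ∑ i ∈ Finset.range n, dist (f^[k * i] z) (w (k * i)) := by
      apply Finset.sum_congr rfl
      intro i _
      rw [Function.iterate_mul, hw0]
    have e2 : ∑ i ∈ Finset.range n, dist (f^[k * i] z) (w (k * i))
        ≤ ∑ j ∈ Finset.range (n * k), dist (f^[j] z) (w j) := by
      refine sum_comp_le (fun j => dist (f^[j] z) (w j)) (fun j => dist_nonneg)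
        (fun i => k * i) (Finset.range n) (Finset.range (n * k)) ?_ ?_
      · intro a _ c _ hac
        exact Nat.eq_of_mul_eq_mul_left hk0 hac
      · intro i hi
        rw [Finset.mem_range] at hi ⊢
        show k * i < n * k
        have h1 : k * (i + 1) = k * i + k := Nat.mul_succ k i
        have h2 : k * (i + 1) ≤ k * n := Nat.mul_le_mul_left k (by omega)
        have h3 : k * n = n * k := Nat.mul_comm k n
        omega
    have hnk1 : 1 ≤ n * k := by
      have := Nat.mul_le_mul hn1 hk0
      omega
    have hnkN : N ≤ n * k := le_trans hnN (Nat.le_mul_of_pos_right n hk0)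
    have hnkpos : (0:ℝ) < (n * k : ℕ) := by exact_mod_cast hnk1
    have h4 := hN (n * k) hnkN
    rw [div_le_iff₀ hnkpos] at h4
    have e3 : ∑ i ∈ Finset.range n, dist ((f^[k])^[i] z) (x i) ≤ α * (n * k : ℕ) := by
      rw [e1] at *
      exact le_trans e2 h4
    rw [div_le_iff₀ hnpos]
    calc ∑ i ∈ Finset.range n, dist ((f^[k])^[i] z) (x i) ≤ α * (n * k : ℕ) := e3
      _ = α * k * n := by push_cast; ring
  have := limsup_le_of_ev hcnn (max N 1) key
  have hfin : α * k < k * ε' := by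
    have hkpos : (0:ℝ) < k := by exact_mod_cast hk0
    calc α * k < ε' * k := by exact mul_lt_mul_of_pos_right hαε hkpos
      _ = k * ε' := by ring
  exact lt_of_le_of_lt this hfin

lemma stmt8_claim {X : Type*} [MetricSpace X] (f : X → X) {k : ℕ} (hk : 1 < k)
    (x : ℕ → X) {ε' δ : ℝ} (hε' : 0 < ε') (hδ : 0 < δ)
    (hH : ∀ w : ℕ → X,
      Filter.atTop.limsup
        (fun n : ℕ => (∑ j ∈ Finset.range n, dist (f (w j)) (w (j + 1))) / n) < δ →
      ∃ z : X, Filter.atTop.limsup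
        (fun n : ℕ => (∑ j ∈ Finset.range n, dist (f^[j] z) (w j)) / n) < ε')
    (S1 : ∀ w : X, Filter.IsBoundedUnder (· ≤ ·) Filter.atTop
      (fun n : ℕ => (∑ i ∈ Finset.range n, dist ((f^[k])^[i] w) (x i)) / n))
    {L : ℝ} {NL : ℕ}
    (hL : ∀ n ≥ NL, ∑ i ∈ Finset.range n, dist (x i) (x (i + 1)) ≤ L * n) :
    ∀ r : ℕ, 1 ≤ r → r < k →
      ¬ Filter.IsBoundedUnder (· ≤ ·) Filter.atTop
        (fun n : ℕ => (∑ i ∈ Finset.range n, dist (x i) (f^[r] (x i))) / n) →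
      ∃ z : X, Filter.atTop.limsup
        (fun n : ℕ => (∑ i ∈ Finset.range n, dist ((f^[k])^[i] z) (x i)) / n) < k * ε' := by
  intro r
  induction r using Nat.strong_induction_on with
  | _ r IH =>
  intro hr1 hrk hdisp
  have hk0 : 0 < k := by omega
  set w : ℕ → X :=
    fun j => if j % k ≤ k - r then x (j / k) else f^[j % k - (k - r)] (x (j / k)) with hwdef
  -- slot at multiples of k
  have hwx : ∀ i : ℕ, w (k * i) = x i := by
    intro i
    have h0 := stmt8_idx hk0 i 0 hk0
    rw [Nat.zero_add] at h0
    simp only [hwdef]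
    rw [h0.1, h0.2]
    simp
  -- end-of-block error lower bound
  have hwend : ∀ i : ℕ,
      dist (x i) (f^[r] (x i)) - dist (x i) (x (i + 1))
        ≤ dist (f (w (k - 1 + k * i))) (w (k - 1 + k * i + 1)) := by
    intro i
    have hidx := stmt8_idx hk0 i (k - 1) (by omega)
    have hfw : f (w (k - 1 + k * i)) = f^[r] (x i) := by
      simp only [hwdef]
      rw [hidx.1, hidx.2]
      by_cases hr2 : r = 1
      · subst hr2
        rw [if_pos (by omega)]
        exact (Function.iterate_one f ▸ rfl)
      · rw [if_neg (by omega)]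
        rw [show k - 1 - (k - r) = r - 1 by omega]
        rw [← Function.iterate_succ_apply' f (r - 1)]
        congr 1
        omega
    have hwn : w (k - 1 + k * i + 1) = x (i + 1) := by
      rw [show k - 1 + k * i + 1 = k * (i + 1) by
        have h : k * (i + 1) = k * i + k := by ring
        omega]
      exact hwx (i + 1)
    rw [hfw, hwn]
    have tri := dist_triangle (x i) (x (i + 1)) (f^[r] (x i))
    have hc : dist (f^[r] (x i)) (x (i + 1)) = dist (x (i + 1)) (f^[r] (x i)) :=
      dist_comm _ _
    linarith
  -- qualification of w as an almost pseudo-orbit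
  have hqual : Filter.atTop.limsup
      (fun n : ℕ => (∑ j ∈ Finset.range n, dist (f (w j)) (w (j + 1))) / n) < δ := by
    have hub : ¬ Filter.IsBoundedUnder (· ≤ ·) Filter.atTop
        (fun n : ℕ => (∑ j ∈ Finset.range n, dist (f (w j)) (w (j + 1))) / n) := by
      intro hbdd
      obtain ⟨M, hM0, N, hN⟩ := lin_of_bdd hbdd
      apply hdisp
      apply bdd_of_lin (M := M * k + L) (N := max N NL)
      intro n hn
      have hnN : N ≤ n := le_trans (le_max_left _ _) hn
      have hnNL : NL ≤ n := le_trans (le_max_right _ _) hn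
      have step1 : ∑ i ∈ Finset.range n, dist (x i) (f^[r] (x i))
          ≤ (∑ i ∈ Finset.range n, dist (f (w (k - 1 + k * i))) (w (k - 1 + k * i + 1)))
            + ∑ i ∈ Finset.range n, dist (x i) (x (i + 1)) := by
        rw [← Finset.sum_add_distrib]
        apply Finset.sum_le_sum
        intro i _
        have := hwend i
        linarith
      have step2 : ∑ i ∈ Finset.range n, dist (f (w (k - 1 + k * i))) (w (k - 1 + k * i + 1))
          ≤ ∑ j ∈ Finset.range (n * k), dist (f (w j)) (w (j + 1)) := by
        refine sum_comp_le (fun j => dist (f (w j)) (w (j + 1))) (fun j => dist_nonneg)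
          (fun i => k - 1 + k * i) (Finset.range n) (Finset.range (n * k)) ?_ ?_
        · intro a _ c _ hac
          exact Nat.eq_of_mul_eq_mul_left hk0 (by omega)
        · intro i hi
          rw [Finset.mem_range] at hi ⊢
          show k - 1 + k * i < n * k
          have h1 : k * (i + 1) = k * i + k := Nat.mul_succ k i
          have h2 : k * (i + 1) ≤ k * n := Nat.mul_le_mul_left k (by omega)
          have h3 : k * n = n * k := Nat.mul_comm k n
          omega
      have hnkN : N ≤ n * k := le_trans hnN (Nat.le_mul_of_pos_right n hk0)
      have step3 : ∑ j ∈ Finset.range (n * k), dist (f (w j)) (w (j + 1)) ≤ M * (n * k : ℕ) :=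
        hN (n * k) hnkN
      have step4 : ∑ i ∈ Finset.range n, dist (x i) (x (i + 1)) ≤ L * n := hL n hnNL
      calc ∑ i ∈ Finset.range n, dist (x i) (f^[r] (x i))
          ≤ M * (n * k : ℕ) + L * n := by linarith
        _ = (M * k + L) * n := by push_cast; ring
    rw [limsup_eq_zero_of_unbounded hub]
    exact hδ
  obtain ⟨z', hz'⟩ := hH w hqual
  by_cases hB : Filter.IsBoundedUnder (· ≤ ·) Filter.atTop
      (fun n : ℕ => (∑ j ∈ Finset.range n, dist (f^[j] z') (w j)) / n)
  · exact ⟨z', win_of_bounded f hk0 x w hwx z' hz' hB⟩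
  · -- unbounded: extract a residue
    obtain ⟨r', hr'k, hr'ub⟩ :=
      exists_unbounded_residue hk0 (fun j => dist (f^[j] z') (w j)) (fun j => dist_nonneg) hB
    have hidx' : ∀ i : ℕ, (r' + k * i) % k = r' ∧ (r' + k * i) / k = i :=
      fun i => stmt8_idx hk0 i r' hr'k
    have hit : ∀ i : ℕ, f^[r' + k * i] z' = (f^[k])^[i] (f^[r'] z') := by
      intro i
      rw [Nat.add_comm, Function.iterate_add_apply, Function.iterate_mul]
    by_cases hslot : r' ≤ k - r
    · -- slot is x i : contradicts S1
      exfalso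
      apply hr'ub
      have heq : (fun n : ℕ => (∑ i ∈ Finset.range n,
            dist (f^[r' + k * i] z') (w (r' + k * i))) / n)
          = (fun n : ℕ => (∑ i ∈ Finset.range n,
            dist ((f^[k])^[i] (f^[r'] z')) (x i)) / n) := by
        funext n
        congr 1
        apply Finset.sum_congr rfl
        intro i _
        rw [hit i]
        congr 1
        simp only [hwdef]
        rw [(hidx' i).1, (hidx' i).2, if_pos hslot]
      rw [heq]
      exact S1 (f^[r'] z')
    · -- slot is f^[m'] (x i) with 1 ≤ m' < r : descend
      set m' := r' - (k - r) with hm'def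
      have hm'1 : 1 ≤ m' := by omega
      have hm'r : m' < r := by omega
      have hm'k : m' < k := by omega
      have hslotv : ∀ i : ℕ, w (r' + k * i) = f^[m'] (x i) := by
        intro i
        simp only [hwdef]
        rw [(hidx' i).1, (hidx' i).2, if_neg hslot]
      have hdisp' : ¬ Filter.IsBoundedUnder (· ≤ ·) Filter.atTop
          (fun n : ℕ => (∑ i ∈ Finset.range n, dist (x i) (f^[m'] (x i))) / n) := by
        intro hbd
        obtain ⟨M1, hM10, N1, hN1⟩ := lin_of_bdd hbd
        obtain ⟨M2, hM20, N2, hN2⟩ := lin_of_bdd (S1 (f^[r'] z'))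
        apply hr'ub
        apply bdd_of_lin (M := M2 + M1) (N := max N1 N2)
        intro n hn
        have hnN1 : N1 ≤ n := le_trans (le_max_left _ _) hn
        have hnN2 : N2 ≤ n := le_trans (le_max_right _ _) hn
        have tri : ∀ i : ℕ, dist (f^[r' + k * i] z') (w (r' + k * i))
            ≤ dist ((f^[k])^[i] (f^[r'] z')) (x i) + dist (x i) (f^[m'] (x i)) := by
          intro i
          rw [hit i, hslotv i]
          exact dist_triangle _ _ _
        calc ∑ i ∈ Finset.range n, dist (f^[r' + k * i] z') (w (r' + k * i))
            ≤ ∑ i ∈ Finset.range n,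
              (dist ((f^[k])^[i] (f^[r'] z')) (x i) + dist (x i) (f^[m'] (x i))) :=
              Finset.sum_le_sum fun i _ => tri i
          _ = (∑ i ∈ Finset.range n, dist ((f^[k])^[i] (f^[r'] z')) (x i))
              + ∑ i ∈ Finset.range n, dist (x i) (f^[m'] (x i)) := Finset.sum_add_distrib
          _ ≤ M2 * n + M1 * n := add_le_add (hN2 n hnN2) (hN1 n hnN1)
          _ = (M2 + M1) * n := by ring
      exact IH m' hm'r hm'1 hm'k hdisp'


end Stmt8Aux

theorem stmt8 {X : Type*} [MetricSpace X] (f : X → X) (hf : Continuous f)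
    (h : ALASP f) : ∀ k : ℕ, 1 < k → ALASP (f^[k]) := by
  intro k hk ε hε
  have hk0 : 0 < k := by omega
  have hkR : (0:ℝ) < k := by exact_mod_cast hk0
  have hε' : 0 < ε / (2 * k) := by positivity
  obtain ⟨δ, hδ, hH⟩ := h (ε / (2 * k)) hε'
  refine ⟨δ, hδ, ?_⟩
  intro x hx
  have hhalf : (k : ℝ) * (ε / (2 * k)) = ε / 2 := by field_simp
  by_cases hW : ∀ w : X, Filter.IsBoundedUnder (· ≤ ·) Filter.atTop
      (fun n : ℕ => (∑ i ∈ Finset.range n, dist ((f^[k])^[i] w) (x i)) / n)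
  case neg =>
    push_neg at hW
    obtain ⟨z, hz⟩ := hW
    exact ⟨z, by rw [limsup_eq_zero_of_unbounded hz]; exact hε⟩
  case pos =>
  -- consecutive distances grow at most linearly
  obtain ⟨M0, hM00, N0, hN0⟩ := lin_of_bdd (hW (x 0))
  obtain ⟨M1, hM10, N1, hN1⟩ := lin_of_bdd (hW (f^[k] (x 0)))
  have hL : ∀ n ≥ max N1 (max N0 1), ∑ i ∈ Finset.range n, dist (x i) (x (i + 1))
      ≤ (M1 + 2 * M0) * n := by
    intro n hn
    have hnN1 : N1 ≤ n := le_trans (le_max_left _ _) hn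
    have hnN0 : N0 ≤ n := le_trans (le_trans (le_max_left _ _) (le_max_right _ _)) hn
    have hn1 : 1 ≤ n := le_trans (le_trans (le_max_right _ _) (le_max_right _ _)) hn
    have h1 : ∀ i : ℕ, dist (x i) (x (i + 1))
        ≤ dist ((f^[k])^[i] (f^[k] (x 0))) (x i) + dist ((f^[k])^[i + 1] (x 0)) (x (i + 1)) := by
      intro i
      have he : (f^[k])^[i] (f^[k] (x 0)) = (f^[k])^[i + 1] (x 0) :=
        (Function.iterate_succ_apply (f^[k]) i (x 0)).symm
      calc dist (x i) (x (i + 1))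
          ≤ dist (x i) ((f^[k])^[i] (f^[k] (x 0)))
            + dist ((f^[k])^[i] (f^[k] (x 0))) (x (i + 1)) := dist_triangle _ _ _
        _ = dist ((f^[k])^[i] (f^[k] (x 0))) (x i)
            + dist ((f^[k])^[i + 1] (x 0)) (x (i + 1)) := by rw [dist_comm, he]
    have hsum1 : ∑ i ∈ Finset.range n, dist ((f^[k])^[i] (f^[k] (x 0))) (x i) ≤ M1 * n :=
      hN1 n hnN1
    have hsum2 : ∑ i ∈ Finset.range n, dist ((f^[k])^[i + 1] (x 0)) (x (i + 1))
        ≤ M0 * (n + 1 : ℕ) := by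
      have hle : ∑ i ∈ Finset.range n, dist ((f^[k])^[i + 1] (x 0)) (x (i + 1))
          ≤ ∑ i ∈ Finset.range (n + 1), dist ((f^[k])^[i] (x 0)) (x i) := by
        refine sum_comp_le (fun i => dist ((f^[k])^[i] (x 0)) (x i)) (fun i => dist_nonneg)
          (fun i => i + 1) (Finset.range n) (Finset.range (n + 1)) ?_ ?_
        · intro a _ c _ hac; omega
        · intro i hi; rw [Finset.mem_range] at hi ⊢; show i + 1 < n + 1; omega
      exact le_trans hle (hN0 (n + 1) (by omega))
    have htot : ∑ i ∈ Finset.range n, dist (x i) (x (i + 1))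
        ≤ M1 * n + M0 * (n + 1 : ℕ) := by
      calc ∑ i ∈ Finset.range n, dist (x i) (x (i + 1))
          ≤ ∑ i ∈ Finset.range n, (dist ((f^[k])^[i] (f^[k] (x 0))) (x i)
            + dist ((f^[k])^[i + 1] (x 0)) (x (i + 1))) := Finset.sum_le_sum fun i _ => h1 i
        _ = (∑ i ∈ Finset.range n, dist ((f^[k])^[i] (f^[k] (x 0))) (x i))
            + ∑ i ∈ Finset.range n, dist ((f^[k])^[i + 1] (x 0)) (x (i + 1)) :=
            Finset.sum_add_distrib
        _ ≤ M1 * n + M0 * (n + 1 : ℕ) := add_le_add hsum1 hsum2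
    have hcast : (((n + 1 : ℕ)) : ℝ) ≤ 2 * n := by
      push_cast
      have : (1:ℝ) ≤ n := by exact_mod_cast hn1
      linarith
    calc ∑ i ∈ Finset.range n, dist (x i) (x (i + 1)) ≤ M1 * n + M0 * (n + 1 : ℕ) := htot
      _ ≤ M1 * n + M0 * (2 * n) := by nlinarith [hM00]
      _ = (M1 + 2 * M0) * n := by ring
  -- the interpolating pseudo-orbit
  set y : ℕ → X := fun j => f^[j % k] (x (j / k)) with hydef
  have hyx : ∀ i : ℕ, y (k * i) = x i := by
    intro i
    have h0 := stmt8_idx hk0 i 0 hk0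
    rw [Nat.zero_add] at h0
    simp only [hydef]
    rw [h0.1, h0.2]
    simp
  have hey0 : ∀ q s : ℕ, s + 1 < k → dist (f (y (s + k * q))) (y (s + k * q + 1)) = 0 := by
    intro q s hs
    have h1 := stmt8_idx hk0 q s (by omega)
    have h2 := stmt8_idx hk0 q (s + 1) hs
    have e1 : y (s + k * q) = f^[s] (x q) := by
      simp only [hydef]; rw [h1.1, h1.2]
    have e2 : y (s + k * q + 1) = f^[s + 1] (x q) := by
      have hidx : s + k * q + 1 = (s + 1) + k * q := by omega
      simp only [hydef]
      rw [hidx, h2.1, h2.2]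
    rw [e1, e2, ← Function.iterate_succ_apply' f s, dist_self]
  have heya : ∀ q : ℕ, dist (f (y (k - 1 + k * q))) (y (k - 1 + k * q + 1))
      = dist (f^[k] (x q)) (x (q + 1)) := by
    intro q
    have h1 := stmt8_idx hk0 q (k - 1) (by omega)
    have e1 : y (k - 1 + k * q) = f^[k - 1] (x q) := by
      simp only [hydef]; rw [h1.1, h1.2]
    have e2 : y (k - 1 + k * q + 1) = x (q + 1) := by
      rw [show k - 1 + k * q + 1 = k * (q + 1) by
        have hm : k * (q + 1) = k * q + k := by ring
        omega]
      exact hyx (q + 1)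
    rw [e1, e2, ← Function.iterate_succ_apply' f (k - 1)]
    congr 2
    omega
  have hpt : ∀ j : ℕ, dist (f (y j)) (y (j + 1))
      ≤ if j % k = k - 1 then dist (f^[k] (x (j / k))) (x (j / k + 1)) else 0 := by
    intro j
    have hdec : j % k + k * (j / k) = j := Nat.mod_add_div j k
    by_cases hj : j % k = k - 1
    · rw [if_pos hj]
      have e := heya (j / k)
      rw [show k - 1 + k * (j / k) = j by omega] at e
      exact le_of_eq e
    · rw [if_neg hj]
      have hlt : j % k + 1 < k := by
        have := Nat.mod_lt j hk0
        omega
      have e := hey0 (j / k) (j % k) hlt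
      rw [hdec] at e
      exact le_of_eq e
  -- qualification of y
  have hqualy : Filter.atTop.limsup
      (fun n : ℕ => (∑ j ∈ Finset.range n, dist (f (y j)) (y (j + 1))) / n) < δ := by
    by_cases hA : Filter.IsBoundedUnder (· ≤ ·) Filter.atTop
        (fun n : ℕ => (∑ i ∈ Finset.range n, dist (f^[k] (x i)) (x (i + 1))) / n)
    · have hann : ∀ n : ℕ, 0 ≤ (∑ i ∈ Finset.range n, dist (f^[k] (x i)) (x (i + 1))) / n :=
        fun n => div_nonneg (Finset.sum_nonneg fun i _ => dist_nonneg) (Nat.cast_nonneg n)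
      obtain ⟨α, hα0, hαδ, N, hN⟩ := ev_bound_of_limsup_lt hann hA hx
      have heyn : ∀ n : ℕ, 0 ≤ (∑ j ∈ Finset.range n, dist (f (y j)) (y (j + 1))) / n :=
        fun n => div_nonneg (Finset.sum_nonneg fun i _ => dist_nonneg) (Nat.cast_nonneg n)
      refine lt_of_le_of_lt (limsup_le_of_ev heyn (max N 1) ?_) hαδ
      intro n hn
      have hn1 : 1 ≤ n := le_trans (le_max_right _ _) hn
      have hnN : N ≤ n := le_trans (le_max_left _ _) hn
      have hnpos : (0:ℝ) < n := by exact_mod_cast hn1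
      rw [div_le_iff₀ hnpos]
      have s1 : ∑ j ∈ Finset.range n, dist (f (y j)) (y (j + 1))
          ≤ ∑ j ∈ Finset.range n,
            (if j % k = k - 1 then dist (f^[k] (x (j / k))) (x (j / k + 1)) else 0) :=
        Finset.sum_le_sum fun j _ => hpt j
      have s2 : ∑ j ∈ Finset.range n,
            (if j % k = k - 1 then dist (f^[k] (x (j / k))) (x (j / k + 1)) else 0)
          = ∑ j ∈ (Finset.range n).filter (fun j => j % k = k - 1),
            dist (f^[k] (x (j / k))) (x (j / k + 1)) := (Finset.sum_filter _ _).symm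
      have s3 : ∑ j ∈ (Finset.range n).filter (fun j => j % k = k - 1),
            dist (f^[k] (x (j / k))) (x (j / k + 1))
          ≤ ∑ i ∈ Finset.range n, dist (f^[k] (x i)) (x (i + 1)) := by
        refine sum_comp_le (fun i => dist (f^[k] (x i)) (x (i + 1))) (fun i => dist_nonneg)
          (fun j => j / k) ((Finset.range n).filter (fun j => j % k = k - 1))
          (Finset.range n) ?_ ?_
        · intro a ha c hc hac
          simp only [Finset.mem_filter] at ha hc
          have hda := Nat.mod_add_div a k
          have hdc := Nat.mod_add_div c k
          rw [ha.2, hc.2, hac] at *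
          omega
        · intro j hj
          simp only [Finset.mem_filter, Finset.mem_range] at hj ⊢
          exact lt_of_le_of_lt (Nat.div_le_self _ _) hj.1
      have s4 : ∑ i ∈ Finset.range n, dist (f^[k] (x i)) (x (i + 1)) ≤ α * n := by
        have := hN n hnN
        rw [div_le_iff₀ hnpos] at this
        exact this
      linarith
    · have hub : ¬ Filter.IsBoundedUnder (· ≤ ·) Filter.atTop
          (fun n : ℕ => (∑ j ∈ Finset.range n, dist (f (y j)) (y (j + 1))) / n) := by
        intro hbd
        obtain ⟨M, hM0, N, hN⟩ := lin_of_bdd hbd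
        apply hA
        apply bdd_of_lin (M := M * k) (N := N)
        intro m hm
        have t1 : ∑ i ∈ Finset.range m, dist (f^[k] (x i)) (x (i + 1))
            = ∑ i ∈ Finset.range m, dist (f (y (k - 1 + k * i))) (y (k - 1 + k * i + 1)) :=
          Finset.sum_congr rfl fun i _ => (heya i).symm
        have t2 : ∑ i ∈ Finset.range m, dist (f (y (k - 1 + k * i))) (y (k - 1 + k * i + 1))
            ≤ ∑ j ∈ Finset.range (m * k), dist (f (y j)) (y (j + 1)) := by
          refine sum_comp_le (fun j => dist (f (y j)) (y (j + 1))) (fun j => dist_nonneg)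
            (fun i => k - 1 + k * i) (Finset.range m) (Finset.range (m * k)) ?_ ?_
          · intro a _ c _ hac
            exact Nat.eq_of_mul_eq_mul_left hk0 (by omega)
          · intro i hi
            rw [Finset.mem_range] at hi ⊢
            show k - 1 + k * i < m * k
            have h1 : k * (i + 1) = k * i + k := by ring
            have h2 : k * (i + 1) ≤ k * m := Nat.mul_le_mul_left k (by omega)
            have h3 : k * m = m * k := Nat.mul_comm k m
            omega
        have t3 : ∑ j ∈ Finset.range (m * k), dist (f (y j)) (y (j + 1)) ≤ M * (m * k : ℕ) :=
          hN (m * k) (le_trans hm (Nat.le_mul_of_pos_right m hk0))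
        calc ∑ i ∈ Finset.range m, dist (f^[k] (x i)) (x (i + 1)) ≤ M * (m * k : ℕ) := by
              rw [t1]; exact le_trans t2 t3
          _ = (M * k) * m := by push_cast; ring
      rw [limsup_eq_zero_of_unbounded hub]
      exact hδ
  obtain ⟨z, hz⟩ := hH y hqualy
  by_cases hB : Filter.IsBoundedUnder (· ≤ ·) Filter.atTop
      (fun n : ℕ => (∑ j ∈ Finset.range n, dist (f^[j] z) (y j)) / n)
  · have hwin := win_of_bounded f hk0 x y hyx z hz hB
    rw [hhalf] at hwin
    exact ⟨z, lt_trans hwin (by linarith)⟩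
  · obtain ⟨r', hr'k, hr'ub⟩ :=
      exists_unbounded_residue hk0 (fun j => dist (f^[j] z) (y j)) (fun j => dist_nonneg) hB
    have hidx' : ∀ i : ℕ, (r' + k * i) % k = r' ∧ (r' + k * i) / k = i :=
      fun i => stmt8_idx hk0 i r' hr'k
    have hyslot : ∀ i : ℕ, y (r' + k * i) = f^[r'] (x i) := by
      intro i
      simp only [hydef]
      rw [(hidx' i).1, (hidx' i).2]
    have hit : ∀ i : ℕ, f^[r' + k * i] z = (f^[k])^[i] (f^[r'] z) := by
      intro i
      rw [Nat.add_comm, Function.iterate_add_apply, Function.iterate_mul]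
    by_cases hr'0 : r' = 0
    · exfalso
      apply hr'ub
      subst hr'0
      have heq : (fun n : ℕ => (∑ i ∈ Finset.range n,
            dist (f^[0 + k * i] z) (y (0 + k * i))) / n)
          = (fun n : ℕ => (∑ i ∈ Finset.range n,
            dist ((f^[k])^[i] (f^[0] z)) (x i)) / n) := by
        funext n
        congr 1
        apply Finset.sum_congr rfl
        intro i _
        rw [hit i, hyslot i]
        simp
      rw [heq]
      exact hW (f^[0] z)
    · have hr'1 : 1 ≤ r' := by omega
      have hdisp : ¬ Filter.IsBoundedUnder (· ≤ ·) Filter.atTop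
          (fun n : ℕ => (∑ i ∈ Finset.range n, dist (x i) (f^[r'] (x i))) / n) := by
        intro hbd
        obtain ⟨Ma, hMa0, Na, hNa⟩ := lin_of_bdd hbd
        obtain ⟨Mb, hMb0, Nb, hNb⟩ := lin_of_bdd (hW (f^[r'] z))
        apply hr'ub
        apply bdd_of_lin (M := Mb + Ma) (N := max Na Nb)
        intro n hn
        have hnNa : Na ≤ n := le_trans (le_max_left _ _) hn
        have hnNb : Nb ≤ n := le_trans (le_max_right _ _) hn
        have tri : ∀ i : ℕ, dist (f^[r' + k * i] z) (y (r' + k * i))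
            ≤ dist ((f^[k])^[i] (f^[r'] z)) (x i) + dist (x i) (f^[r'] (x i)) := by
          intro i
          rw [hit i, hyslot i]
          exact dist_triangle _ _ _
        calc ∑ i ∈ Finset.range n, dist (f^[r' + k * i] z) (y (r' + k * i))
            ≤ ∑ i ∈ Finset.range n,
              (dist ((f^[k])^[i] (f^[r'] z)) (x i) + dist (x i) (f^[r'] (x i))) :=
              Finset.sum_le_sum fun i _ => tri i
          _ = (∑ i ∈ Finset.range n, dist ((f^[k])^[i] (f^[r'] z)) (x i))
              + ∑ i ∈ Finset.range n, dist (x i) (f^[r'] (x i)) := Finset.sum_add_distrib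
          _ ≤ Mb * n + Ma * n := add_le_add (hNb n hnNb) (hNa n hnNa)
          _ = (Mb + Ma) * n := by ring
      obtain ⟨z', hz'⟩ := stmt8_claim f hk x hε' hδ hH hW hL r' hr'1 hr'k hdisp
      rw [hhalf] at hz'
      exact ⟨z', lt_trans hz' (by linarith)⟩
end

section
/- If (X,d₁) and (Y,d₂) are bounded metric spaces and f : X → X, g : Y → Y both have the almost average shadowing property, then the product map f × g has the almost average shadowing property with respect to the sup metric on X × Y. -/
open Filter Finset

private lemma avg_nonneg' {u : ℕ → ℝ} (hu : ∀ i, 0 ≤ u i) (n : ℕ) :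
    0 ≤ (∑ i ∈ Finset.range n, u i) / n :=
  div_nonneg (Finset.sum_nonneg fun i _ => hu i) (Nat.cast_nonneg n)

private lemma avg_le' {u : ℕ → ℝ} {C : ℝ} (hC : 0 ≤ C) (h : ∀ i, u i ≤ C) (n : ℕ) :
    (∑ i ∈ Finset.range n, u i) / n ≤ C := by
  rcases Nat.eq_zero_or_pos n with h0 | h0
  · simp [h0, hC]
  · rw [div_le_iff₀ (by exact_mod_cast h0)]
    calc ∑ i ∈ Finset.range n, u i ≤ ∑ _i ∈ Finset.range n, C :=
          Finset.sum_le_sum fun i _ => h i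
      _ = C * n := by rw [Finset.sum_const, Finset.card_range, nsmul_eq_mul]; ring

private lemma avg_mono' {u v : ℕ → ℝ} (h : ∀ i, u i ≤ v i) (n : ℕ) :
    (∑ i ∈ Finset.range n, u i) / n ≤ (∑ i ∈ Finset.range n, v i) / n := by
  rcases Nat.eq_zero_or_pos n with h0 | h0
  · simp [h0]
  · exact div_le_div_of_nonneg_right (Finset.sum_le_sum fun i _ => h i)
      (Nat.cast_nonneg n)

theorem stmt9 {X Y : Type*} [MetricSpace X] [MetricSpace Y]
    (hX : Bornology.IsBounded (Set.univ : Set X))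
    (hY : Bornology.IsBounded (Set.univ : Set Y))
    (f : X → X) (g : Y → Y) (hf : Continuous f) (hg : Continuous g)
    (haf : ALASP f) (hag : ALASP g) :
    ALASP (Prod.map f g : X × Y → X × Y) := by
  intro ε hε
  obtain ⟨δ₁, hδ₁, H₁⟩ := haf (ε / 2) (by positivity)
  obtain ⟨δ₂, hδ₂, H₂⟩ := hag (ε / 2) (by positivity)
  obtain ⟨Cx, hCx⟩ := Metric.isBounded_iff.1 hX
  obtain ⟨Cy, hCy⟩ := Metric.isBounded_iff.1 hY
  set C : ℝ := max (max Cx Cy) 0 with hCdef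
  have hC0 : (0:ℝ) ≤ C := le_max_right _ _
  have hdX : ∀ a b : X, dist a b ≤ C := fun a b =>
    (hCx (Set.mem_univ a) (Set.mem_univ b)).trans
      ((le_max_left Cx Cy).trans (le_max_left _ _))
  have hdY : ∀ a b : Y, dist a b ≤ C := fun a b =>
    (hCy (Set.mem_univ a) (Set.mem_univ b)).trans
      ((le_max_right Cx Cy).trans (le_max_left _ _))
  have hdP : ∀ p q : X × Y, dist p q ≤ C := fun p q => by
    rw [Prod.dist_eq]; exact max_le (hdX _ _) (hdY _ _)
  refine ⟨min δ₁ δ₂, lt_min hδ₁ hδ₂, fun z hz => ?_⟩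
  set P : ℕ → ℝ :=
    fun n => (∑ i ∈ Finset.range n, dist (Prod.map f g (z i)) (z (i + 1))) / n with hP
  set A : ℕ → ℝ :=
    fun n => (∑ i ∈ Finset.range n, dist (f ((z i).1)) ((z (i + 1)).1)) / n with hA
  set B : ℕ → ℝ :=
    fun n => (∑ i ∈ Finset.range n, dist (g ((z i).2)) ((z (i + 1)).2)) / n with hB
  have hPbdd : Filter.atTop.IsBoundedUnder (· ≤ ·) P :=
    Filter.isBoundedUnder_of ⟨C, fun n => avg_le' hC0 (fun i => hdP _ _) n⟩
  have hAP : ∀ n, A n ≤ P n := fun n =>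
    avg_mono' (fun i => by
      rw [Prod.dist_eq]; exact le_max_left _ _) n
  have hBP : ∀ n, B n ≤ P n := fun n =>
    avg_mono' (fun i => by
      rw [Prod.dist_eq]; exact le_max_right _ _) n
  have hAlim : Filter.atTop.limsup A < δ₁ := by
    refine lt_of_le_of_lt (Filter.limsup_le_limsup (Filter.Eventually.of_forall hAP)
      (Filter.isCoboundedUnder_le_of_le Filter.atTop
        (fun n => avg_nonneg' (fun i => dist_nonneg) n)) hPbdd) ?_
    exact lt_of_lt_of_le hz (min_le_left _ _)
  have hBlim : Filter.atTop.limsup B < δ₂ := by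
    refine lt_of_le_of_lt (Filter.limsup_le_limsup (Filter.Eventually.of_forall hBP)
      (Filter.isCoboundedUnder_le_of_le Filter.atTop
        (fun n => avg_nonneg' (fun i => dist_nonneg) n)) hPbdd) ?_
    exact lt_of_lt_of_le hz (min_le_right _ _)
  obtain ⟨w₁, hw₁⟩ := H₁ (fun i => (z i).1) hAlim
  obtain ⟨w₂, hw₂⟩ := H₂ (fun i => (z i).2) hBlim
  refine ⟨(w₁, w₂), ?_⟩
  set S : ℕ → ℝ :=
    fun n => (∑ i ∈ Finset.range n, dist ((Prod.map f g)^[i] (w₁, w₂)) (z i)) / n with hS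
  set S₁ : ℕ → ℝ :=
    fun n => (∑ i ∈ Finset.range n, dist (f^[i] w₁) ((z i).1)) / n with hS₁
  set S₂ : ℕ → ℝ :=
    fun n => (∑ i ∈ Finset.range n, dist (g^[i] w₂) ((z i).2)) / n with hS₂
  have hSle : ∀ n, S n ≤ S₁ n + S₂ n := by
    intro n
    have key : ∀ i, dist ((Prod.map f g)^[i] (w₁, w₂)) (z i) ≤
        dist (f^[i] w₁) ((z i).1) + dist (g^[i] w₂) ((z i).2) := by
      intro i
      rw [Prod.map_iterate, Prod.dist_eq]
      exact max_le (le_add_of_nonneg_right dist_nonneg)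
        (le_add_of_nonneg_left dist_nonneg)
    calc S n ≤ (∑ i ∈ Finset.range n,
          (dist (f^[i] w₁) ((z i).1) + dist (g^[i] w₂) ((z i).2))) / n :=
        avg_mono' key n
      _ = S₁ n + S₂ n := by
        rw [hS₁, hS₂, Finset.sum_add_distrib, add_div]
  have hS₁bdd : Filter.atTop.IsBoundedUnder (· ≤ ·) S₁ :=
    Filter.isBoundedUnder_of ⟨C, fun n => avg_le' hC0 (fun i => hdX _ _) n⟩
  have hS₂bdd : Filter.atTop.IsBoundedUnder (· ≤ ·) S₂ :=
    Filter.isBoundedUnder_of ⟨C, fun n => avg_le' hC0 (fun i => hdY _ _) n⟩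
  have hS₁cb : Filter.atTop.IsCoboundedUnder (· ≤ ·) S₁ :=
    Filter.isCoboundedUnder_le_of_le Filter.atTop
      (fun n => avg_nonneg' (fun i => dist_nonneg) n)
  have hS₂cb : Filter.atTop.IsCoboundedUnder (· ≤ ·) S₂ :=
    Filter.isCoboundedUnder_le_of_le Filter.atTop
      (fun n => avg_nonneg' (fun i => dist_nonneg) n)
  have hScb : Filter.atTop.IsCoboundedUnder (· ≤ ·) S :=
    Filter.isCoboundedUnder_le_of_le Filter.atTop
      (fun n => avg_nonneg' (fun i => dist_nonneg) n)
  have hadd : Filter.atTop.limsup (S₁ + S₂) ≤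
      Filter.atTop.limsup S₁ + Filter.atTop.limsup S₂ :=
    limsup_add_le
      (Filter.isBoundedUnder_of ⟨0, fun n => avg_nonneg' (fun i => dist_nonneg) n⟩)
      hS₁bdd hS₂cb hS₂bdd
  have hS12 : Filter.atTop.IsBoundedUnder (· ≤ ·) (S₁ + S₂) :=
    Filter.isBoundedUnder_of ⟨C + C, fun n =>
      add_le_add (avg_le' hC0 (fun i => hdX _ _) n) (avg_le' hC0 (fun i => hdY _ _) n)⟩
  calc Filter.atTop.limsup S ≤ Filter.atTop.limsup (S₁ + S₂) :=
      Filter.limsup_le_limsup (Filter.Eventually.of_forall hSle) hScb hS12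
    _ ≤ Filter.atTop.limsup S₁ + Filter.atTop.limsup S₂ := hadd
    _ < ε / 2 + ε / 2 := add_lt_add hw₁ hw₂
    _ = ε := by ring
end

section
/- If X is a compact metric space and f : X → X is a continuous surjection with the almost average shadowing property, then f is chain transitive; in particular, the chain recurrent set of f equals X. -/
open Filter Finset

section AuxChain
variable {X : Type*} [PseudoMetricSpace X]

lemma log_block {M i k : ℕ} (hM : 1 ≤ M) (h1 : M * 2 ^ k ≤ i) (h2 : i < M * 2 ^ (k + 1)) :
    Nat.log 2 (i / M) = k := by
  have hM0 : 0 < M := hM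
  apply Nat.log_eq_of_pow_le_of_lt_pow
  · exact (Nat.le_div_iff_mul_le hM0).2 (by rw [mul_comm]; exact h1)
  · exact (Nat.div_lt_iff_lt_mul hM0).2 (by rw [mul_comm]; exact h2)

lemma block_bounds {M i : ℕ} (hM : 1 ≤ M) (hMi : M ≤ i) :
    M * 2 ^ (Nat.log 2 (i / M)) ≤ i ∧ i < M * 2 ^ (Nat.log 2 (i / M) + 1) := by
  have hM0 : 0 < M := hM
  have hne : i / M ≠ 0 := by
    have : 1 ≤ i / M := (Nat.le_div_iff_mul_le hM0).2 (by omega)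
    omega
  constructor
  · have h1 := Nat.pow_log_le_self 2 hne
    have h2 := (Nat.le_div_iff_mul_le hM0).1 h1
    rw [mul_comm]
    exact h2
  · have h1 := Nat.lt_pow_succ_log_self (b := 2) (by norm_num) (i / M)
    have h2 := (Nat.div_lt_iff_lt_mul hM0).1 h1
    rw [mul_comm]
    rw [Nat.succ_eq_add_one] at h2
    exact h2

open scoped Classical in
lemma count_jumps (M n : ℕ) (hM : 1 ≤ M) :
    ((Finset.range n).filter (fun i => ∃ t : ℕ, i + 1 = M * 2 ^ t)).card ≤ n / M := by
  classical
  have hcard : ((Finset.range n).filter (fun i => ∃ t : ℕ, i + 1 = M * 2 ^ t)).card ≤ (Finset.range (n / M)).card := by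
    apply Finset.card_le_card_of_injOn (fun i => Nat.log 2 ((i + 1) / M))
    · intro i hi
      simp only [Finset.coe_filter, Finset.mem_coe, Finset.mem_filter, Set.mem_setOf_eq, Finset.mem_range] at hi
      obtain ⟨hin, t, ht⟩ := hi
      have hdiv : (i + 1) / M = 2 ^ t := by rw [ht, Nat.mul_div_cancel_left _ hM]
      show Nat.log 2 ((i + 1) / M) ∈ Finset.range (n / M)
      rw [hdiv, Nat.log_pow (by norm_num)]
      have h2 : 2 ^ t * M ≤ n := by rw [mul_comm, ← ht]; omega
      have : 2 ^ t ≤ n / M := (Nat.le_div_iff_mul_le hM).2 h2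
      have := @Nat.lt_two_pow_self t
      exact Finset.mem_range.2 (by omega)
    · intro i hi j hj hij
      simp only [Finset.coe_filter, Set.mem_setOf_eq, Finset.mem_range] at hi hj
      obtain ⟨_, t, ht⟩ := hi
      obtain ⟨_, s, hsj⟩ := hj
      have h1 : (i + 1) / M = 2 ^ t := by rw [ht, Nat.mul_div_cancel_left _ hM]
      have h2 : (j + 1) / M = 2 ^ s := by rw [hsj, Nat.mul_div_cancel_left _ hM]
      simp only [h1, h2, Nat.log_pow (by norm_num : 1 < 2)] at hij
      subst hij
      omega
  simpa using hcard

/-- the pseudo-orbit: x-orbit blocks (even) alternating with backward-orbit-of-y blocks (odd). -/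
noncomputable def wseq (f : X → X) (x : X) (g : ℕ → X) (M : ℕ) (i : ℕ) : X :=
  if i < M then f^[i] x
  else if (Nat.log 2 (i / M)) % 2 = 0 then f^[i - M * 2 ^ (Nat.log 2 (i / M))] x
  else g (M * 2 ^ (Nat.log 2 (i / M) + 1) - 1 - i)

lemma wseq_even (f : X → X) (x : X) (g : ℕ → X) {M k i : ℕ} (hM : 1 ≤ M) (hk : k % 2 = 0)
    (h1 : M * 2 ^ k ≤ i) (h2 : i < M * 2 ^ (k + 1)) :
    wseq f x g M i = f^[i - M * 2 ^ k] x := by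
  have hp : 0 < 2 ^ k := pow_pos (by norm_num) k
  have hMi : M ≤ i := le_trans (Nat.le_mul_of_pos_right M hp) h1
  have hlog := log_block hM h1 h2
  unfold wseq
  rw [if_neg (by omega), hlog, if_pos hk]

lemma wseq_odd (f : X → X) (x : X) (g : ℕ → X) {M k i : ℕ} (hM : 1 ≤ M) (hk : k % 2 = 1)
    (h1 : M * 2 ^ k ≤ i) (h2 : i < M * 2 ^ (k + 1)) :
    wseq f x g M i = g (M * 2 ^ (k + 1) - 1 - i) := by
  have hp : 0 < 2 ^ k := pow_pos (by norm_num) k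
  have hMi : M ≤ i := le_trans (Nat.le_mul_of_pos_right M hp) h1
  have hlog := log_block hM h1 h2
  unfold wseq
  rw [if_neg (by omega), hlog, if_neg (by omega)]

lemma wseq_no_jump {f : X → X} {x : X} {g : ℕ → X} {M : ℕ} (hM : 1 ≤ M)
    (hg : ∀ n, f (g (n + 1)) = g n) (i : ℕ) (h : ¬ ∃ t : ℕ, i + 1 = M * 2 ^ t) :
    wseq f x g M (i + 1) = f (wseq f x g M i) := by
  by_cases h1 : i + 1 < M
  · unfold wseq
    rw [if_pos h1, if_pos (by omega), Function.iterate_succ_apply']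
  · have hne : i + 1 ≠ M := fun hc => h ⟨0, by simpa using hc⟩
    have hMi : M ≤ i := by omega
    obtain ⟨hb1, hb2⟩ := block_bounds hM hMi
    set k := Nat.log 2 (i / M) with hkdef
    have hlt : i + 1 < M * 2 ^ (k + 1) := by
      rcases Nat.lt_or_ge (i + 1) (M * 2 ^ (k + 1)) with hc | hc
      · exact hc
      · exact absurd ⟨k + 1, by omega⟩ h
    have hlog' : Nat.log 2 ((i + 1) / M) = k := log_block hM (by omega) hlt
    by_cases hk : k % 2 = 0
    · rw [wseq_even f x g hM hk (by omega) hlt,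
        wseq_even f x g hM hk hb1 hb2 (k := k)]
      have : i + 1 - M * 2 ^ k = (i - M * 2 ^ k) + 1 := by omega
      rw [this, Function.iterate_succ_apply']
    · have hk1 : k % 2 = 1 := by omega
      rw [wseq_odd f x g hM hk1 (by omega) hlt,
        wseq_odd f x g hM hk1 hb1 hb2 (k := k)]
      have e1 : M * 2 ^ (k + 1) - 1 - i = (M * 2 ^ (k + 1) - 1 - (i + 1)) + 1 := by omega
      rw [e1, hg]

end AuxChain

theorem stmt10 {X : Type*} [MetricSpace X] [CompactSpace X] (f : X → X)
    (hf : Continuous f) (hs : Function.Surjective f) (h : ALASP f) :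
    chainTransitive f ∧ ∀ x : X, chainRecurrent f x := by
  have hCT : chainTransitive f := by
    intro δ hδ x y
    -- uniform continuity modulus
    obtain ⟨ε₁, hε₁, hUC⟩ : ∃ ε₁ > (0:ℝ), ∀ u v : X, dist u v < ε₁ → dist (f u) (f v) < δ := by
      have huc := (CompactSpace.uniformContinuous_of_continuous hf)
      rw [Metric.uniformContinuous_iff] at huc
      obtain ⟨ε₁, h1, h2⟩ := huc δ hδ
      exact ⟨ε₁, h1, fun u v hd => h2 hd⟩
    set ε := min ε₁ δ with hεdef
    have hε0 : 0 < ε := lt_min hε₁ hδ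
    have hεδ : ε ≤ δ := min_le_right _ _
    have hεε₁ : ε ≤ ε₁ := min_le_left _ _
    obtain ⟨δ₀, hδ₀, hALASP⟩ := h (ε / 8) (by positivity)
    -- a bound on distances
    obtain ⟨C, hC⟩ := Metric.isBounded_iff.mp (isCompact_univ (X := X)).isBounded
    set B := max C 0 with hBdef
    have hB0 : (0:ℝ) ≤ B := le_max_right _ _
    have hBd : ∀ u v : X, dist u v ≤ B :=
      fun u v => le_trans (hC (Set.mem_univ u) (Set.mem_univ v)) (le_max_left _ _)
    -- choose M
    obtain ⟨M₀, hM₀⟩ := exists_nat_gt (B / δ₀)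
    set M := max M₀ 1 with hMdef
    have hM1 : 1 ≤ M := le_max_right _ _
    have hMpos : (0:ℝ) < M := by exact_mod_cast hM1
    have hBM : B / M < δ₀ := by
      have hMM : (M₀ : ℝ) ≤ M := by exact_mod_cast le_max_left _ _
      have : B / δ₀ < M := lt_of_lt_of_le hM₀ hMM
      rw [div_lt_iff₀ hδ₀] at this
      rw [div_lt_iff₀ hMpos]
      linarith
    -- backward orbit of y
    set s : X → X := fun u => (hs u).choose with hsdef
    have hsp : ∀ u, f (s u) = u := fun u => (hs u).choose_spec
    set g : ℕ → X := fun n => s^[n] y with hgdef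
    have hg0 : g 0 = y := rfl
    have hg : ∀ n, f (g (n + 1)) = g n := by
      intro n
      show f (s^[n + 1] y) = s^[n] y
      rw [Function.iterate_succ_apply']
      exact hsp _
    set w := wseq f x g M with hwdef
    -- the pseudo-orbit has small average jumps
    have hwnn : ∀ n : ℕ, (0:ℝ) ≤ (∑ i ∈ Finset.range n, dist (f (w i)) (w (i + 1))) / n := by
      intro n
      apply div_nonneg _ (Nat.cast_nonneg n)
      exact Finset.sum_nonneg fun i _ => dist_nonneg
    have hjump : Filter.atTop.limsup
        (fun n : ℕ => (∑ i ∈ Finset.range n, dist (f (w i)) (w (i + 1))) / n) < δ₀ := by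
      have hble : ∀ n : ℕ, (∑ i ∈ Finset.range n, dist (f (w i)) (w (i + 1))) / n ≤ B / M := by
        intro n
        rcases Nat.eq_zero_or_pos n with hn | hn
        · simp [hn]
          positivity
        have hnpos : (0:ℝ) < n := by exact_mod_cast hn
        rw [div_le_iff₀ hnpos]
        classical
        calc ∑ i ∈ Finset.range n, dist (f (w i)) (w (i + 1))
            ≤ ∑ i ∈ Finset.range n, (if ∃ t : ℕ, i + 1 = M * 2 ^ t then B else 0) := by
              apply Finset.sum_le_sum
              intro i _
              by_cases hi : ∃ t : ℕ, i + 1 = M * 2 ^ t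
              · rw [if_pos hi]; exact hBd _ _
              · rw [if_neg hi, hwdef, wseq_no_jump hM1 hg i hi]
                simp
          _ = ((Finset.range n).filter (fun i => ∃ t : ℕ, i + 1 = M * 2 ^ t)).card * B := by
              rw [← Finset.sum_filter, Finset.sum_const, nsmul_eq_mul]
          _ ≤ ((n / M : ℕ) : ℝ) * B := by
              apply mul_le_mul_of_nonneg_right _ hB0
              exact_mod_cast count_jumps M n hM1
          _ ≤ ((n : ℝ) / M) * B := mul_le_mul_of_nonneg_right Nat.cast_div_le hB0
          _ = B / M * n := by ring
      have hcb : Filter.IsCoboundedUnder (· ≤ ·) Filter.atTop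
          (fun n : ℕ => (∑ i ∈ Finset.range n, dist (f (w i)) (w (i + 1))) / n) := by
        apply Filter.IsBounded.isCobounded_flip (r := (· ≥ ·))
        exact Filter.isBoundedUnder_of ⟨0, fun n => hwnn n⟩
      exact lt_of_le_of_lt (Filter.limsup_le_of_le hcb (Filter.Eventually.of_forall hble)) hBM
    obtain ⟨z, hz⟩ := hALASP w hjump
    -- eventual average-shadowing bound
    have hbdd : Filter.IsBoundedUnder (· ≤ ·) Filter.atTop
        (fun n : ℕ => (∑ i ∈ Finset.range n, dist (f^[i] z) (w i)) / n) := by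
      apply Filter.isBoundedUnder_of
      refine ⟨B, fun n => ?_⟩
      rcases Nat.eq_zero_or_pos n with hn | hn
      · simp [hn, hB0]
      have hnpos : (0:ℝ) < n := by exact_mod_cast hn
      rw [div_le_iff₀ hnpos]
      calc ∑ i ∈ Finset.range n, dist (f^[i] z) (w i)
          ≤ ∑ _i ∈ Finset.range n, B := Finset.sum_le_sum fun i _ => hBd _ _
        _ = B * n := by simp [mul_comm]
    have hev := Filter.eventually_lt_of_limsup_lt hz hbdd
    obtain ⟨N, hN⟩ := Filter.eventually_atTop.mp hev
    -- every late block contains a good index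
    have key : ∀ k : ℕ, N ≤ M * 2 ^ (k + 1) →
        ∃ i, M * 2 ^ k ≤ i ∧ i < M * 2 ^ (k + 1) ∧ dist (f^[i] z) (w i) < ε := by
      intro k hk
      by_contra hcon
      push_neg at hcon
      have hn := hN (M * 2 ^ (k + 1)) hk
      set n := M * 2 ^ (k + 1) with hndef
      set m := M * 2 ^ k with hmdef
      have hm1 : 1 ≤ m := by
        have := pow_pos (show 0 < 2 by norm_num) k
        exact Nat.one_le_iff_ne_zero.2 (by positivity)
      have hnm : n = 2 * m := by rw [hndef, hmdef, pow_succ]; ring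
      have hsum : ε * m ≤ ∑ i ∈ Finset.range n, dist (f^[i] z) (w i) := by
        have h1 : ε * m = ∑ _i ∈ Finset.Ico m n, ε := by
          rw [Finset.sum_const, Nat.card_Ico, nsmul_eq_mul]
          have e : n - m = m := by omega
          rw [e, mul_comm]
        rw [h1]
        calc ∑ _i ∈ Finset.Ico m n, ε
            ≤ ∑ i ∈ Finset.Ico m n, dist (f^[i] z) (w i) := by
              apply Finset.sum_le_sum
              intro i hi
              rw [Finset.mem_Ico] at hi
              exact hcon i hi.1 hi.2
          _ ≤ ∑ i ∈ Finset.range n, dist (f^[i] z) (w i) := by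
              apply Finset.sum_le_sum_of_subset_of_nonneg
              · intro i hi
                rw [Finset.mem_Ico] at hi
                exact Finset.mem_range.2 hi.2
              · intro i _ _
                exact dist_nonneg
      have hnpos : (0:ℝ) < n := by
        have : 0 < n := by omega
        exact_mod_cast this
      rw [div_lt_iff₀ hnpos] at hn
      have hcast : (n:ℝ) = 2 * m := by exact_mod_cast hnm
      have hmR : (1:ℝ) ≤ m := by exact_mod_cast hm1
      nlinarith [hsum, hn]
    -- pick a good index in an even (x-type) block and a later odd (y-type) block
    have hNlt : ∀ c : ℕ, N ≤ M * 2 ^ (2 * N + c + 1) := by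
      intro c
      have h1 : N < 2 ^ N := @Nat.lt_two_pow_self N
      have h2 : (2:ℕ) ^ N ≤ 2 ^ (2 * N + c + 1) := Nat.pow_le_pow_right (by norm_num) (by omega)
      have h3 : (2:ℕ) ^ (2 * N + c + 1) ≤ M * 2 ^ (2 * N + c + 1) := by
        conv_lhs => rw [← Nat.one_mul (2 ^ (2 * N + c + 1))]
        exact Nat.mul_le_mul_right _ hM1
      omega
    obtain ⟨i, hi1, hi2, hi3⟩ := key (2 * N) (hNlt 0)
    obtain ⟨j, hj1, hj2, hj3⟩ := key (2 * N + 3) (hNlt 3)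
    have hwi : w i = f^[i - M * 2 ^ (2 * N)] x :=
      wseq_even f x g hM1 (by omega) hi1 hi2
    have hwj : w j = g (M * 2 ^ (2 * N + 3 + 1) - 1 - j) :=
      wseq_odd f x g hM1 (by omega) hj1 hj2
    set a := i - M * 2 ^ (2 * N) with hadef
    set b := M * 2 ^ (2 * N + 3 + 1) - 1 - j with hbdef2
    have hij : i + 2 ≤ j := by
      have e1 : M * 2 ^ (2 * N + 3) = 4 * (M * 2 ^ (2 * N + 1)) := by ring
      have e2 : 1 ≤ M * 2 ^ (2 * N + 1) := by
        have := pow_pos (show 0 < 2 by norm_num) (2 * N + 1)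
        exact Nat.one_le_iff_ne_zero.2 (by positivity)
      omega
    -- the two jump estimates
    have hstep2 : dist (f (f^[a] x)) (f^[i + 1] z) < δ := by
      rw [Function.iterate_succ_apply']
      apply hUC
      rw [dist_comm]
      rw [hwi] at hi3
      exact lt_of_lt_of_le hi3 hεε₁
    have hstep4 : dist (f^[j] z) (g b) < δ := by
      rw [hwj] at hj3
      exact lt_of_lt_of_le hj3 hεδ
    set n := a + (j - i) + b with hndef
    refine ⟨n, by omega, ?_⟩
    refine ⟨fun t => if t ≤ a then f^[t] x
      else if t < a + (j - i) then f^[t - a + i] z else g (n - t), ?_, ?_, ?_⟩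
    · simp
    · have h1 : ¬ n ≤ a := by omega
      have h2 : ¬ n < a + (j - i) := by omega
      beta_reduce
      rw [if_neg h1, if_neg h2]
      simp [hg0]
    · intro t ht
      beta_reduce
      by_cases h1 : t + 1 ≤ a
      · -- inside x-block
        rw [if_pos (by omega : t ≤ a), if_pos h1, Function.iterate_succ_apply']
        simp [hδ]
      by_cases h2 : t ≤ a
      · -- t = a : jump from x-orbit to z-orbit
        have hta : t = a := by omega
        rw [if_pos h2, if_neg h1, if_pos (by omega : t + 1 < a + (j - i))]
        have e1 : t + 1 - a + i = i + 1 := by omega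
        rw [e1, hta]
        exact hstep2
      by_cases h3 : t + 1 < a + (j - i)
      · -- inside z-orbit
        rw [if_neg h2, if_neg (by omega : ¬ t + 1 ≤ a), if_pos (by omega : t < a + (j - i)),
          if_pos h3]
        have e1 : t + 1 - a + i = (t - a + i) + 1 := by omega
        rw [e1, Function.iterate_succ_apply']
        simp [hδ]
      by_cases h4 : t + 1 = a + (j - i)
      · -- jump from z-orbit to backward orbit of y
        rw [if_neg h2, if_neg (by omega : ¬ t + 1 ≤ a), if_pos (by omega : t < a + (j - i)),
          if_neg (by omega : ¬ t + 1 < a + (j - i))]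
        have e1 : t - a + i = j - 1 := by omega
        have e2 : n - (t + 1) = b := by omega
        rw [e1, e2]
        have e3 : f (f^[j - 1] z) = f^[j] z := by
          rw [← Function.iterate_succ_apply' f]
          congr 1
          omega
        rw [e3]
        exact hstep4
      · -- inside backward orbit of y
        rw [if_neg h2, if_neg (by omega : ¬ t + 1 ≤ a), if_neg (by omega : ¬ t < a + (j - i)),
          if_neg (by omega : ¬ t + 1 < a + (j - i))]
        have e1 : n - t = (n - (t + 1)) + 1 := by omega
        rw [e1, hg]
        simp [hδ]
  refine ⟨hCT, fun x => fun δ hδ => ⟨hCT δ hδ x x, hCT δ hδ x x⟩⟩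
end

section
/- If X is a compact metric space and f : X → X is a continuous surjection with the almost average shadowing property, then f is chain mixing. -/
open Filter Finset

theorem stmt11 {X : Type*} [MetricSpace X] [CompactSpace X] (f : X → X)
    (hf : Continuous f) (hs : Function.Surjective f) (h : ALASP f) :
    chainMixing f := by
  intro δ hδ x y
  -- uniform continuity
  obtain ⟨η, hη, hcont⟩ :=
    Metric.uniformContinuous_iff.mp (CompactSpace.uniformContinuous_of_continuous hf) δ hδ
  -- ALASP with ε = η/4
  obtain ⟨δ', hδ', halasp⟩ := h (η / 4) (by positivity)
  -- a bound on distances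
  obtain ⟨D0, hD0d⟩ : ∃ C, ∀ a b : X, dist a b ≤ C := by
    obtain ⟨C, hC⟩ := Metric.isBounded_iff.mp (isCompact_univ (X := X)).isBounded
    exact ⟨C, fun a b => hC trivial trivial⟩
  set D := max D0 0 with hD
  have hD0 : (0:ℝ) ≤ D := le_max_right _ _
  have hDd : ∀ a b : X, dist a b ≤ D := fun a b => (hD0d a b).trans (le_max_left _ _)
  obtain ⟨N0, hN0⟩ := exists_nat_ge (8 * D / δ')
  refine ⟨max (N0 + 1) 12, lt_of_lt_of_le (by norm_num : (0:ℕ) < 12) (le_max_right _ _), ?_⟩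
  intro n hn
  have hn12 : 12 ≤ n := le_trans (le_max_right _ _) hn
  have hnN0 : N0 + 1 ≤ n := le_trans (le_max_left _ _) hn
  set P := n + 1 with hPdef
  have hP0 : 0 < P := Nat.succ_pos n
  have hPR : (0:ℝ) < (P:ℕ) := by exact_mod_cast hP0
  have hPδ : 8 * D ≤ δ' * P := by
    have h1 : 8 * D ≤ (N0:ℝ) * δ' := (div_le_iff₀ hδ').mp hN0
    have h2 : (N0:ℝ) ≤ P := by exact_mod_cast (by omega : N0 ≤ P)
    nlinarith
  set B := P / 2 with hBdef
  set A := P - B with hAdef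
  have hAB : A + B = P := by omega
  have hB6 : 6 ≤ B := by omega
  have hA6 : 6 ≤ A := by omega
  -- backward orbit of y
  obtain ⟨b, hb0, hb⟩ : ∃ b : ℕ → X, b 0 = y ∧ ∀ k, f (b (k + 1)) = b k := by
    refine ⟨fun k => Nat.rec y (fun _ q => Classical.choose (hs q)) k, rfl, fun k => ?_⟩
    exact Classical.choose_spec (hs _)
  -- the periodic pseudo-orbit
  set p : ℕ → X := fun i => if i % P < A then f^[i % P] x else b (P - 1 - i % P) with hp
  have hmod : ∀ k t, t < P → (k * P + t) % P = t := by
    intro k t ht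
    rw [add_comm, Nat.add_mul_mod_self_right]
    exact Nat.mod_eq_of_lt ht
  have hpx : ∀ k t, t < A → p (k * P + t) = f^[t] x := by
    intro k t ht
    simp only [hp]
    rw [hmod k t (by omega), if_pos ht]
  have hpb : ∀ k r, A ≤ r → r < P → p (k * P + r) = b (P - 1 - r) := by
    intro k r h1 h2
    simp only [hp]
    rw [hmod k r h2, if_neg (by omega)]
  -- per-term error bound
  have hblock : ∀ k j, j < P → dist (f (p (k * P + j))) (p (k * P + j + 1)) ≤
      (if j = A - 1 then D else 0) + (if j = P - 1 then D else 0) := by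
    intro k j hj
    have hpos1 : (0:ℝ) ≤ if j = A - 1 then D else 0 := by split <;> simp [hD0]
    have hpos2 : (0:ℝ) ≤ if j = P - 1 then D else 0 := by split <;> simp [hD0]
    by_cases h1 : j = A - 1
    · rw [if_pos h1]; linarith [hDd (f (p (k * P + j))) (p (k * P + j + 1))]
    · by_cases h2 : j = P - 1
      · rw [if_pos h2]; linarith [hDd (f (p (k * P + j))) (p (k * P + j + 1))]
      · rw [if_neg h1, if_neg h2]
        rcases lt_or_ge (j + 1) A with hA' | hA'
        · have e1 : p (k * P + j) = f^[j] x := hpx k j (by omega)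
          have e2 : p (k * P + j + 1) = f^[j + 1] x := by
            rw [add_assoc]; exact hpx k (j + 1) hA'
          rw [e1, e2, Function.iterate_succ_apply', dist_self]
          norm_num
        · have e1 : p (k * P + j) = b (P - 1 - j) := hpb k j (by omega) hj
          have e2 : p (k * P + j + 1) = b (P - 1 - (j + 1)) := by
            rw [add_assoc]; exact hpb k (j + 1) (by omega) (by omega)
          have e3 : f (b (P - 1 - j)) = b (P - 1 - (j + 1)) := by
            have := hb (P - 1 - (j + 1))
            rwa [show P - 1 - (j + 1) + 1 = P - 1 - j by omega] at this
          rw [e1, e2, e3, dist_self]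
          norm_num
  -- block error sum
  have hblocksum : ∀ k, ∑ j ∈ Finset.range P, dist (f (p (k * P + j))) (p (k * P + j + 1)) ≤ 2 * D := by
    intro k
    calc ∑ j ∈ Finset.range P, dist (f (p (k * P + j))) (p (k * P + j + 1))
        ≤ ∑ j ∈ Finset.range P, ((if j = A - 1 then D else 0) + (if j = P - 1 then D else 0)) :=
          Finset.sum_le_sum (fun j hj => hblock k j (Finset.mem_range.mp hj))
      _ = D + D := by
          rw [Finset.sum_add_distrib, Finset.sum_ite_eq' (Finset.range P) (A - 1) (fun _ => D),
            Finset.sum_ite_eq' (Finset.range P) (P - 1) (fun _ => D)]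
          rw [if_pos (Finset.mem_range.mpr (by omega : A - 1 < P)),
            if_pos (Finset.mem_range.mpr (by omega : P - 1 < P))]
      _ ≤ 2 * D := by linarith
  have hKsum : ∀ K : ℕ, ∑ i ∈ Finset.range (K * P), dist (f (p i)) (p (i + 1)) ≤ (K:ℝ) * (2 * D) := by
    intro K
    induction K with
    | zero => simp
    | succ K ih =>
      rw [Nat.succ_mul, Finset.sum_range_add]
      push_cast
      have := hblocksum K
      linarith
  -- limsup of average error < δ'
  have herr : Filter.atTop.limsup
      (fun m : ℕ => (∑ i ∈ Finset.range m, dist (f (p i)) (p (i + 1))) / m) < δ' := by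
    have hev : ∀ᶠ m in Filter.atTop,
        (∑ i ∈ Finset.range m, dist (f (p i)) (p (i + 1))) / m ≤ δ' / 2 := by
      rw [Filter.eventually_atTop]
      refine ⟨P, fun m hm => ?_⟩
      have hm0 : 0 < m := lt_of_lt_of_le hP0 hm
      have hm0R : (0:ℝ) < m := by exact_mod_cast hm0
      have hmP : (P:ℝ) ≤ m := by exact_mod_cast hm
      have hmlt : m ≤ (m / P + 1) * P := by
        have h1 := Nat.div_add_mod' m P
        have h2 := Nat.mod_lt m hP0
        calc m = m / P * P + m % P := h1.symm
          _ ≤ m / P * P + P := by omega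
          _ = (m / P + 1) * P := by rw [Nat.succ_mul]
      have hle : (∑ i ∈ Finset.range m, dist (f (p i)) (p (i + 1)))
          ≤ ((m / P : ℕ) + 1 : ℝ) * (2 * D) := by
        calc ∑ i ∈ Finset.range m, dist (f (p i)) (p (i + 1))
            ≤ ∑ i ∈ Finset.range ((m / P + 1) * P), dist (f (p i)) (p (i + 1)) :=
              Finset.sum_le_sum_of_subset_of_nonneg (Finset.range_subset_range.mpr hmlt)
                (fun i _ _ => dist_nonneg)
          _ ≤ ((m / P + 1 : ℕ) : ℝ) * (2 * D) := hKsum _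
          _ = ((m / P : ℕ) + 1 : ℝ) * (2 * D) := by push_cast; ring
      have hcast : ((m / P : ℕ) : ℝ) ≤ (m:ℝ) / P := Nat.cast_div_le
      have hone : (1:ℝ) ≤ (m:ℝ) / P := by rw [le_div_iff₀ hPR]; linarith
      have hQ : ((m / P : ℕ) + 1 : ℝ) ≤ 2 * m / P := by
        rw [mul_div_assoc]; linarith
      calc (∑ i ∈ Finset.range m, dist (f (p i)) (p (i + 1))) / m
          ≤ (((m / P : ℕ) + 1 : ℝ) * (2 * D)) / m := (div_le_div_iff_of_pos_right hm0R).mpr hle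
        _ ≤ ((2 * (m:ℝ) / P) * (2 * D)) / m := by
            apply (div_le_div_iff_of_pos_right hm0R).mpr
            exact mul_le_mul_of_nonneg_right hQ (by linarith)
        _ = 4 * D / P := by
            field_simp
            ring
        _ ≤ δ' / 2 := by rw [div_le_div_iff₀ hPR (by norm_num : (0:ℝ) < 2)]; linarith
    have hnn : ∀ m : ℕ, 0 ≤ (∑ i ∈ Finset.range m, dist (f (p i)) (p (i + 1))) / m := by
      intro m
      apply div_nonneg (Finset.sum_nonneg fun i _ => dist_nonneg) (Nat.cast_nonneg m)
    exact lt_of_le_of_lt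
      (Filter.limsup_le_of_le (Filter.isCoboundedUnder_le_of_le Filter.atTop hnn) hev)
      (by linarith)
  -- get the shadowing point
  obtain ⟨z, hz⟩ := halasp p herr
  have hgD : ∀ m : ℕ, (∑ i ∈ Finset.range m, dist (f^[i] z) (p i)) / m ≤ D := by
    intro m
    rcases Nat.eq_zero_or_pos m with h0 | h0
    · simp [h0, hD0]
    · have hm0R : (0:ℝ) < m := by exact_mod_cast h0
      rw [div_le_iff₀ hm0R]
      calc ∑ i ∈ Finset.range m, dist (f^[i] z) (p i)
          ≤ ∑ _i ∈ Finset.range m, D := Finset.sum_le_sum fun i _ => hDd _ _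
        _ = D * m := by rw [Finset.sum_const, Finset.card_range, nsmul_eq_mul]; ring
  have hev2 : ∀ᶠ m in Filter.atTop, (∑ i ∈ Finset.range m, dist (f^[i] z) (p i)) / m < η / 4 :=
    Filter.eventually_lt_of_limsup_lt hz (Filter.isBoundedUnder_of ⟨D, hgD⟩)
  obtain ⟨M, hM⟩ := Filter.eventually_atTop.mp hev2
  -- find a good pair in some period
  have hgood : ∃ k t v, t < A ∧ v < B - 1 ∧ dist (f^[k * P + t] z) (p (k * P + t)) < η ∧
      dist (f^[k * P + A + v] z) (p (k * P + A + v)) < η := by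
    by_contra hbad
    push_neg at hbad
    set m₀ := min A (B - 1) with hm₀
    have hm₀P : P ≤ 3 * m₀ := by omega
    have hblocklow : ∀ k, (m₀ : ℝ) * η ≤ ∑ j ∈ Finset.range P, dist (f^[k * P + j] z) (p (k * P + j)) := by
      intro k
      by_cases hex : ∃ t, t < A ∧ dist (f^[k * P + t] z) (p (k * P + t)) < η
      · obtain ⟨t, ht, hgt⟩ := hex
        have hall : ∀ v, v < B - 1 → η ≤ dist (f^[k * P + A + v] z) (p (k * P + A + v)) :=
          fun v hv => hbad k t v ht hv hgt
        have hsub : ((B - 1 : ℕ) : ℝ) * η ≤ ∑ v ∈ Finset.range (B - 1),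
            dist (f^[k * P + A + v] z) (p (k * P + A + v)) := by
          have := Finset.card_nsmul_le_sum (Finset.range (B - 1))
            (fun v => dist (f^[k * P + A + v] z) (p (k * P + A + v))) η
            (fun v hv => hall v (Finset.mem_range.mp hv))
          simpa [Finset.card_range, nsmul_eq_mul] using this
        have hsub2 : ∑ v ∈ Finset.range (B - 1), dist (f^[k * P + A + v] z) (p (k * P + A + v))
            ≤ ∑ v ∈ Finset.range B, dist (f^[k * P + A + v] z) (p (k * P + A + v)) :=
          Finset.sum_le_sum_of_subset_of_nonneg (Finset.range_subset_range.mpr (by omega))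
            (fun i _ _ => dist_nonneg)
        have hsplit : ∑ j ∈ Finset.range P, dist (f^[k * P + j] z) (p (k * P + j))
            = (∑ j ∈ Finset.range A, dist (f^[k * P + j] z) (p (k * P + j)))
              + ∑ v ∈ Finset.range B, dist (f^[k * P + A + v] z) (p (k * P + A + v)) := by
          rw [← hAB, Finset.sum_range_add]
          congr 1
          apply Finset.sum_congr rfl
          intro i _
          congr 2 <;> omega
        have hnn : (0:ℝ) ≤ ∑ j ∈ Finset.range A, dist (f^[k * P + j] z) (p (k * P + j)) :=
          Finset.sum_nonneg fun i _ => dist_nonneg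
        have hcast : (m₀ : ℝ) ≤ ((B - 1 : ℕ) : ℝ) := by exact_mod_cast (by omega : m₀ ≤ B - 1)
        nlinarith
      · push_neg at hex
        have hsub : ((A : ℕ) : ℝ) * η ≤ ∑ t ∈ Finset.range A,
            dist (f^[k * P + t] z) (p (k * P + t)) := by
          have := Finset.card_nsmul_le_sum (Finset.range A)
            (fun t => dist (f^[k * P + t] z) (p (k * P + t))) η
            (fun t ht => hex t (Finset.mem_range.mp ht))
          simpa [Finset.card_range, nsmul_eq_mul] using this
        have hsub2 : ∑ t ∈ Finset.range A, dist (f^[k * P + t] z) (p (k * P + t))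
            ≤ ∑ j ∈ Finset.range P, dist (f^[k * P + j] z) (p (k * P + j)) :=
          Finset.sum_le_sum_of_subset_of_nonneg (Finset.range_subset_range.mpr (by omega))
            (fun i _ _ => dist_nonneg)
        have hcast : (m₀ : ℝ) ≤ ((A : ℕ) : ℝ) := by exact_mod_cast (by omega : m₀ ≤ A)
        nlinarith
    have hlow : ∀ k : ℕ, (k : ℝ) * ((m₀:ℝ) * η) ≤ ∑ i ∈ Finset.range (k * P), dist (f^[i] z) (p i) := by
      intro k
      induction k with
      | zero => simp
      | succ k ih =>
        rw [Nat.succ_mul, Finset.sum_range_add]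
        push_cast
        have := hblocklow k
        linarith
    set k := M + 1 with hk
    have hk0 : 0 < k := Nat.succ_pos M
    have hkP0 : (0:ℝ) < ((k * P : ℕ) : ℝ) := by
      have : 0 < k * P := Nat.mul_pos hk0 hP0
      exact_mod_cast this
    have h1 : (∑ i ∈ Finset.range (k * P), dist (f^[i] z) (p i)) / ((k * P : ℕ) : ℝ) < η / 4 := by
      apply hM
      calc M ≤ k := Nat.le_succ M
        _ ≤ k * P := Nat.le_mul_of_pos_right _ hP0
    have h2 : η / 3 ≤ (∑ i ∈ Finset.range (k * P), dist (f^[i] z) (p i)) / ((k * P : ℕ) : ℝ) := by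
      rw [le_div_iff₀ hkP0]
      have h3 : ((P : ℕ) : ℝ) ≤ 3 * (m₀ : ℝ) := by exact_mod_cast hm₀P
      have hkR : (0:ℝ) ≤ (k : ℝ) := Nat.cast_nonneg k
      have h4 := hlow k
      have hcast : ((k * P : ℕ) : ℝ) = (k : ℝ) * (P : ℝ) := by push_cast; ring
      rw [hcast]
      nlinarith [mul_le_mul_of_nonneg_left h3 (mul_nonneg hkR hη.le)]
    linarith
  -- build the chain
  obtain ⟨k, t, v, ht, hv, hg1, hg2⟩ := hgood
  rw [hpx k t ht] at hg1
  have hg2' : dist (f^[k * P + A + v] z) (b (B - 1 - v)) < η := by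
    rw [show k * P + A + v = k * P + (A + v) by ring] at hg2
    rw [hpb k (A + v) (by omega) (by omega)] at hg2
    rw [show P - 1 - (A + v) = B - 1 - v by omega] at hg2
    rwa [← add_assoc] at hg2
  set s := A + v - t with hsdef
  have hs1 : 1 ≤ s := by omega
  have htsn : t + s < n := by omega
  refine ⟨fun m => if m ≤ t then f^[m] x else if m ≤ t + s then f^[k * P + m] z else b (n - m),
    ?_, ?_, ?_⟩
  · simp
  · beta_reduce
    rw [if_neg (by omega : ¬ n ≤ t), if_neg (by omega : ¬ n ≤ t + s), Nat.sub_self, hb0]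
  · intro m hm
    beta_reduce
    by_cases c1 : m < t
    · rw [if_pos (le_of_lt c1), if_pos (by omega : m + 1 ≤ t), Function.iterate_succ_apply',
        dist_self]
      exact hδ
    · by_cases c2 : m = t
      · subst c2
        rw [if_pos (le_refl m), if_neg (by omega : ¬ m + 1 ≤ m), if_pos (by omega : m + 1 ≤ m + s),
          show k * P + (m + 1) = (k * P + m) + 1 by ring, Function.iterate_succ_apply']
        exact hcont (by rw [dist_comm]; exact hg1)
      · have htm : t < m := by omega
        by_cases c3 : m < t + s
        · rw [if_neg (by omega : ¬ m ≤ t), if_pos (le_of_lt c3), if_neg (by omega : ¬ m + 1 ≤ t),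
            if_pos (by omega : m + 1 ≤ t + s),
            show k * P + (m + 1) = (k * P + m) + 1 by ring, Function.iterate_succ_apply',
            dist_self]
          exact hδ
        · by_cases c4 : m = t + s
          · rw [if_neg (by omega : ¬ m ≤ t), if_pos (by omega : m ≤ t + s),
              if_neg (by omega : ¬ m + 1 ≤ t), if_neg (by omega : ¬ m + 1 ≤ t + s)]
            have e1 : k * P + m = k * P + A + v := by omega
            have e2 : n - (m + 1) = B - 1 - v - 1 := by omega
            have e3 : f (b (B - 1 - v)) = b (B - 1 - v - 1) := by
              have := hb (B - 1 - v - 1)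
              rwa [show B - 1 - v - 1 + 1 = B - 1 - v by omega] at this
            rw [e1, e2, ← e3]
            exact hcont hg2'
          · have hts : t + s < m := by omega
            rw [if_neg (by omega : ¬ m ≤ t), if_neg (by omega : ¬ m ≤ t + s),
              if_neg (by omega : ¬ m + 1 ≤ t), if_neg (by omega : ¬ m + 1 ≤ t + s)]
            have e : f (b (n - m)) = b (n - (m + 1)) := by
              have := hb (n - (m + 1))
              rwa [show n - (m + 1) + 1 = n - m by omega] at this
            rw [e, dist_self]
            exact hδ
end

section
/- If X is a compact metric space and f : X → X has the almost average shadowing property, then the chain recurrent set CR(f) consists of a single chain component; that is, any two chain recurrent points of f are chain equivalent. -/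
open Filter Finset

section ProofHelpers
variable {X : Type*} [MetricSpace X]

lemma isChain_trans {f : X → X} {δ : ℝ} {a b c : X} {n m : ℕ}
    (h1 : isChain f δ a b n) (h2 : isChain f δ b c m) : isChain f δ a c (n + m) := by
  obtain ⟨c1, h10, h1n, h1j⟩ := h1
  obtain ⟨c2, h20, h2m, h2j⟩ := h2
  refine ⟨fun k => if k < n then c1 k else c2 (k - n), ?_, ?_, ?_⟩
  · rcases Nat.eq_zero_or_pos n with hn | hn
    · subst hn; simpa [h20] using (h10 ▸ h1n).symm
    · simp [hn, h10]
  · have : ¬ (n + m < n) := by omega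
    simp [this, h2m]
  · intro i hi
    rcases lt_trichotomy (i + 1) n with hlt | heq | hgt
    · simp only [if_pos hlt, if_pos (by omega : i < n)]
      exact h1j i (by omega)
    · have hi' : i < n := by omega
      simp only [if_pos hi', if_neg (by omega : ¬ i + 1 < n)]
      have : c2 (i + 1 - n) = c1 (i + 1) := by
        rw [heq]; simp [h20, ← h1n, heq]
      rw [this]
      exact h1j i (by omega)
    · have hi1 : ¬ i < n := by omega
      have hi2 : ¬ i + 1 < n := by omega
      simp only [if_neg hi1, if_neg hi2]
      have : i + 1 - n = (i - n) + 1 := by omega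
      rw [this]
      exact h2j (i - n) (by omega)

lemma isChain_orbit {f : X → X} {δ : ℝ} (hδ : 0 < δ) (u : X) (r : ℕ) :
    isChain f δ u (f^[r] u) r :=
  ⟨fun k => f^[k] u, rfl, rfl, fun i _ => by
    simp only []
    rw [Function.iterate_succ_apply' f i u]
    simpa using hδ⟩

lemma exists_uc [CompactSpace X] {f : X → X} (hf : Continuous f) {δ : ℝ} (hδ : 0 < δ) :
    ∃ β > (0:ℝ), β ≤ δ/2 ∧ ∀ a b : X, dist a b < β → dist (f a) (f b) < δ/2 := by
  have h := CompactSpace.uniformContinuous_of_continuous hf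
  rw [Metric.uniformContinuous_iff] at h
  obtain ⟨β, hβ, hb⟩ := h (δ/2) (by linarith)
  refine ⟨min β (δ/2), by positivity, min_le_right _ _, fun a b hab => ?_⟩
  exact hb (lt_of_lt_of_le hab (min_le_left _ _))

lemma step_back [CompactSpace X] {f : X → X} (hf : Continuous f) {u : X}
    (hu : ∀ δ > (0:ℝ), ∃ n, 0 < n ∧ isChain f δ u u n) :
    ∀ δ > (0:ℝ), ∃ n, 0 < n ∧ isChain f δ (f u) u n := by
  intro δ hδ
  obtain ⟨β, hβ0, hβδ, hβ⟩ := exists_uc hf hδ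
  obtain ⟨n₁, hn₁, hc₁⟩ := hu β hβ0
  obtain ⟨n₂, hn₂, hc₂⟩ := hu β hβ0
  obtain ⟨c, hc0, hcn, hcj⟩ := isChain_trans hc₁ hc₂
  set n := n₁ + n₂ with hn_def
  have hn : 2 ≤ n := by omega
  refine ⟨n - 1, by omega, fun k => if k = 0 then f u else c (k + 1), by simp, ?_, ?_⟩
  · have h1 : ¬ (n - 1 = 0) := by omega
    simp only [if_neg h1]
    rw [show n - 1 + 1 = n by omega, hcn]
  · intro k hk
    by_cases hk0 : k = 0
    · subst hk0
      simp only [if_pos rfl, if_neg one_ne_zero]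
      have h1 : dist (f u) (c 1) < β := by
        have := hcj 0 (by omega)
        rwa [hc0] at this
      have h2 : dist (f (f u)) (f (c 1)) < δ/2 := hβ _ _ h1
      have h3 : dist (f (c 1)) (c 2) < β := hcj 1 (by omega)
      calc dist (f (f u)) (c (0 + 1 + 1))
          ≤ dist (f (f u)) (f (c 1)) + dist (f (c 1)) (c 2) := dist_triangle _ _ _
        _ < δ/2 + β := by exact add_lt_add h2 h3
        _ ≤ δ/2 + δ/2 := by linarith
        _ = δ := by ring
    · simp only [if_neg hk0, if_neg (by omega : ¬ k + 1 = 0)]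
      have := hcj (k + 1) (by omega)
      calc dist (f (c (k + 1))) (c (k + 1 + 1)) < β := this
        _ ≤ δ/2 := hβδ
        _ < δ := by linarith

lemma iterate_back [CompactSpace X] {f : X → X} (hf : Continuous f) {u : X}
    (hu : chainRecurrent f u) (m : ℕ) :
    ∀ δ > (0:ℝ), ∃ n, 0 < n ∧ isChain f δ (f^[m] u) u n := by
  induction m with
  | zero => exact fun δ hδ => (hu δ hδ).1
  | succ m ih =>
    have hself : ∀ δ > (0:ℝ), ∃ n, 0 < n ∧ isChain f δ (f^[m] u) (f^[m] u) n := by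
      intro δ hδ
      obtain ⟨n₁, hn₁, hc₁⟩ := ih δ hδ
      exact ⟨n₁ + m, by omega, isChain_trans hc₁ (isChain_orbit hδ u m)⟩
    intro δ hδ
    obtain ⟨n₁, hn₁, hc₁⟩ := step_back hf hself δ hδ
    obtain ⟨n₂, hn₂, hc₂⟩ := ih δ hδ
    refine ⟨n₁ + n₂, by omega, ?_⟩
    rw [Function.iterate_succ_apply']
    exact isChain_trans hc₁ hc₂

end ProofHelpers

lemma avg_bound_of_blocks {X' : Type} (err : ℕ → ℝ) (D : ℝ) (L : ℕ) (hL : 0 < L) (hD : 0 ≤ D)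
    (h0 : ∀ i, 0 ≤ err i) (hDb : ∀ i, err i ≤ D)
    (hz : ∀ i, i % L ≠ L - 1 → err i = 0) (n : ℕ) :
    (∑ i ∈ Finset.range n, err i) ≤ D * (n / L + 1 : ℕ) := by
  have key : ∀ Q : ℕ, (∑ i ∈ Finset.range (L * Q), err i) ≤ D * Q := by
    intro Q
    induction Q with
    | zero => simp
    | succ Q ih =>
      rw [show L * (Q + 1) = L * Q + L by ring, Finset.sum_range_add]
      have hblock : ∑ j ∈ Finset.range L, err (L * Q + j) ≤ D := by
        calc ∑ j ∈ Finset.range L, err (L * Q + j)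
            ≤ ∑ j ∈ Finset.range L, (if j = L - 1 then D else 0) := by
              apply Finset.sum_le_sum
              intro j hj
              simp only [Finset.mem_range] at hj
              by_cases hje : j = L - 1
              · simp only [if_pos hje]; exact hDb _
              · simp only [if_neg hje]
                have hm : (L * Q + j) % L = j := by
                  rw [Nat.mul_add_mod, Nat.mod_eq_of_lt hj]
                rw [hz _ (by rw [hm]; exact hje)]
          _ = D := by
              rw [Finset.sum_ite_eq' (Finset.range L) (L - 1) (fun _ => D)]
              simp only [Finset.mem_range, if_pos (by omega : L - 1 < L)]
      push_cast
      linarith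
  have hsub : (∑ i ∈ Finset.range n, err i) ≤ ∑ i ∈ Finset.range (L * (n / L + 1)), err i := by
    apply Finset.sum_le_sum_of_subset_of_nonneg
    · apply Finset.range_subset_range.mpr
      have h1 := Nat.div_add_mod n L
      have h2 := Nat.mod_lt n hL
      have h3 : L * (n / L + 1) = L * (n / L) + L := by ring
      omega
    · intro i _ _; exact h0 i
  exact le_trans hsub (by simpa using key (n / L + 1))

lemma exists_good {g : ℕ → ℝ} {D β : ℝ} {L : ℕ} (hg0 : ∀ i, 0 ≤ g i)
    (hgD : ∀ i, g i ≤ D) (hD : 0 ≤ D) (hL : 0 < L) (hβ : 0 < β)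
    (hlim : Filter.atTop.limsup (fun n : ℕ => (∑ i ∈ Finset.range n, g i) / n) < β / 8)
    (o : ℕ) (ho : o ≤ L) (M : ℕ) :
    ∃ i, M ≤ i ∧ o ≤ i % (2 * L) ∧ i % (2 * L) < o + L ∧ g i < β := by
  by_contra hcon
  push_neg at hcon
  have hbd : ∀ n : ℕ, (∑ i ∈ Finset.range n, g i) / n ≤ D := by
    intro n
    rcases Nat.eq_zero_or_pos n with hn | hn
    · simp [hn, hD]
    · rw [div_le_iff₀ (by exact_mod_cast hn)]
      calc (∑ i ∈ Finset.range n, g i) ≤ ∑ _i ∈ Finset.range n, D :=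
            Finset.sum_le_sum fun i _ => hgD i
        _ = n * D := by simp [mul_comm]
        _ = D * n := by ring
  have hev : ∀ᶠ n in Filter.atTop, (∑ i ∈ Finset.range n, g i) / (n : ℝ) < β / 8 :=
    Filter.eventually_lt_of_limsup_lt hlim (Filter.isBoundedUnder_of ⟨D, hbd⟩)
  obtain ⟨N, hN⟩ := Filter.eventually_atTop.mp hev
  have claim : ∀ k : ℕ, (k : ℝ) * ((L : ℝ) * β) ≤ ∑ i ∈ Finset.range (2 * L * (M + k)), g i := by
    intro k
    induction k with
    | zero => simpa using Finset.sum_nonneg fun i _ => hg0 i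
    | succ k ih =>
      rw [show 2 * L * (M + (k + 1)) = 2 * L * (M + k) + 2 * L by ring, Finset.sum_range_add]
      have hblock : (L : ℝ) * β ≤ ∑ j ∈ Finset.range (2 * L), g (2 * L * (M + k) + j) := by
        have hsub : Finset.Ico o (o + L) ⊆ Finset.range (2 * L) := by
          intro j hj
          simp only [Finset.mem_Ico] at hj
          simp only [Finset.mem_range]
          omega
        have h1 : ∑ j ∈ Finset.Ico o (o + L), g (2 * L * (M + k) + j)
            ≤ ∑ j ∈ Finset.range (2 * L), g (2 * L * (M + k) + j) :=
          Finset.sum_le_sum_of_subset_of_nonneg hsub (fun i _ _ => hg0 _)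
        have hterm : ∀ j ∈ Finset.Ico o (o + L), β ≤ g (2 * L * (M + k) + j) := by
          intro j hj
          simp only [Finset.mem_Ico] at hj
          have hmod : (2 * L * (M + k) + j) % (2 * L) = j := by
            rw [Nat.mul_add_mod, Nat.mod_eq_of_lt (by omega)]
          apply hcon
          · have := Nat.le_mul_of_pos_left (M + k) (show 0 < 2 * L by omega)
            omega
          · omega
          · omega
        have h2 := Finset.sum_le_sum hterm
        rw [Finset.sum_const, Nat.card_Ico] at h2
        have hLL : o + L - o = L := by omega
        rw [hLL] at h2
        simp only [nsmul_eq_mul] at h2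
        linarith
      push_cast
      linarith
  set k : ℕ := max (max M 1) N with hk_def
  set n : ℕ := 2 * L * (M + k) with hn_def
  have hkM : M ≤ k := le_trans (le_max_left _ _) (le_max_left _ _)
  have hkN : N ≤ k := le_max_right _ _
  have hnN : N ≤ n := by
    have h1 : M + k ≤ 2 * L * (M + k) := Nat.le_mul_of_pos_left (M + k) (by omega)
    omega
  have hnpos : 0 < n := by
    have : 0 < M + k := by omega
    positivity
  have hnR : (0:ℝ) < (n : ℝ) := by exact_mod_cast hnpos
  have h1 : ((k : ℝ) * ((L : ℝ) * β)) / n ≤ (∑ i ∈ Finset.range n, g i) / n := by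
    gcongr
    exact claim k
  have h2 : β / 4 ≤ ((k : ℝ) * ((L : ℝ) * β)) / n := by
    rw [div_le_div_iff₀ (by norm_num) hnR]
    have hnEq : (n : ℝ) = 2 * (L : ℝ) * ((M : ℝ) + (k : ℝ)) := by
      rw [hn_def]; push_cast; ring
    rw [hnEq]
    have hMk : (M : ℝ) ≤ (k : ℝ) := by exact_mod_cast hkM
    have hL0 : (0 : ℝ) ≤ (L : ℝ) := by positivity
    nlinarith [mul_nonneg (mul_nonneg hβ.le hL0) (sub_nonneg.mpr hMk)]
  have h3 := hN n hnN
  linarith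

lemma chain_one_dir {X : Type*} [MetricSpace X] [CompactSpace X] {f : X → X}
    (hf : Continuous f) (h : ALASP f) {x y : X}
    (hx : chainRecurrent f x) (hy : chainRecurrent f y) :
    ∀ δ > (0:ℝ), ∃ n, 0 < n ∧ isChain f δ x y n := by
  intro δ hδ
  obtain ⟨D, hD0, hD⟩ : ∃ D : ℝ, 0 ≤ D ∧ ∀ a b : X, dist a b ≤ D := by
    obtain ⟨C, hC⟩ := Metric.isBounded_iff.mp (isCompact_univ (X := X)).isBounded
    exact ⟨max C 0, le_max_right _ _, fun a b =>
      le_trans (hC (Set.mem_univ a) (Set.mem_univ b)) (le_max_left _ _)⟩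
  obtain ⟨β, hβ0, hβδ, hβuc⟩ := exists_uc hf hδ
  obtain ⟨δ₀, hδ₀, hshad⟩ := h (β / 8) (by positivity)
  set L : ℕ := ⌊4 * D / δ₀⌋₊ + 1 with hL_def
  have hL : 0 < L := Nat.succ_pos _
  have hLgt : 4 * D / δ₀ < (L : ℝ) := by
    rw [hL_def]; push_cast; exact Nat.lt_floor_add_one _
  have hLR : (1:ℝ) ≤ (L:ℝ) := by exact_mod_cast hL
  have hLRpos : (0:ℝ) < (L:ℝ) := by linarith
  have h4D : 4 * D < δ₀ * L := by
    rw [div_lt_iff₀ hδ₀] at hLgt; linarith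
  set ξ : ℕ → X := fun i => if i % (2 * L) < L then f^[i % (2 * L)] x
    else f^[i % (2 * L) - L] y with hξ_def
  have hξval : ∀ m : ℕ, ξ m = if m % (2 * L) < L then f^[m % (2 * L)] x
      else f^[m % (2 * L) - L] y := by intro m; rw [hξ_def]
  have h2L : 0 < 2 * L := by omega
  -- successor of mod
  have hsucc : ∀ i : ℕ, i % (2 * L) + 1 < 2 * L → (i + 1) % (2 * L) = i % (2 * L) + 1 := by
    intro i hi
    rw [Nat.add_mod, Nat.mod_eq_of_lt (show 1 < 2 * L by omega),
      Nat.mod_eq_of_lt (show i % (2 * L) + 1 < 2 * L from hi)]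
  have herr0 : ∀ i, i % L ≠ L - 1 → dist (f (ξ i)) (ξ (i + 1)) = 0 := by
    intro i hi
    have hrlt : i % (2 * L) < 2 * L := Nat.mod_lt _ h2L
    have hmm : i % (2 * L) % L = i % L := Nat.mod_mod_of_dvd i ⟨2, by ring⟩
    by_cases hcase : i % (2 * L) < L
    · have hrL : i % (2 * L) % L = i % (2 * L) := Nat.mod_eq_of_lt hcase
      have hr1 : i % (2 * L) + 1 < L := by omega
      rw [hξval i, hξval (i + 1), if_pos hcase, hsucc i (by omega),
        if_pos (by omega : i % (2 * L) + 1 < L), Function.iterate_succ_apply' f _ x, dist_self]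
    · have hge : L ≤ i % (2 * L) := by omega
      have hrL : i % (2 * L) % L = i % (2 * L) - L := by
        rw [Nat.mod_eq_sub_mod hge, Nat.mod_eq_of_lt (by omega)]
      have hr1 : i % (2 * L) + 1 < 2 * L := by omega
      rw [hξval i, hξval (i + 1), if_neg hcase, hsucc i hr1,
        if_neg (by omega : ¬ i % (2 * L) + 1 < L),
        show i % (2 * L) + 1 - L = (i % (2 * L) - L) + 1 by omega,
        Function.iterate_succ_apply' f _ y, dist_self]
  -- average error bound
  have hsum := avg_bound_of_blocks (X' := ℕ) (fun i => dist (f (ξ i)) (ξ (i + 1))) D L hL hD0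
    (fun i => dist_nonneg) (fun i => hD _ _) herr0
  have hlim_err : Filter.atTop.limsup
      (fun n : ℕ => (∑ i ∈ Finset.range n, dist (f (ξ i)) (ξ (i + 1))) / n) < δ₀ := by
    have hco : Filter.IsCoboundedUnder (· ≤ ·) Filter.atTop
        (fun n : ℕ => (∑ i ∈ Finset.range n, dist (f (ξ i)) (ξ (i + 1))) / n) := by
      apply Filter.isCoboundedUnder_le_of_le Filter.atTop (x := 0)
      intro n
      positivity
    have hev : ∀ᶠ n : ℕ in Filter.atTop,
        (∑ i ∈ Finset.range n, dist (f (ξ i)) (ξ (i + 1))) / n ≤ δ₀ / 2 := by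
      filter_upwards [Filter.eventually_ge_atTop L] with n hn
      have hn0 : 0 < n := by omega
      have hnR : (0:ℝ) < (n:ℝ) := by exact_mod_cast hn0
      have hnL : (L:ℝ) ≤ (n:ℝ) := by exact_mod_cast hn
      rw [div_le_iff₀ hnR]
      have hc1 : ((n / L : ℕ) : ℝ) ≤ (n : ℝ) / (L : ℝ) := Nat.cast_div_le
      have hc1' : ((n / L : ℕ) : ℝ) * L ≤ (n : ℝ) := by
        rw [← le_div_iff₀ hLRpos]; exact hc1
      calc (∑ i ∈ Finset.range n, dist (f (ξ i)) (ξ (i + 1)))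
          ≤ D * ((n / L + 1 : ℕ) : ℝ) := hsum n
        _ ≤ δ₀ / 2 * n := by
            push_cast
            nlinarith [mul_nonneg hD0 (Nat.cast_nonneg (n / L)),
              mul_nonneg (mul_nonneg hδ₀.le (Nat.cast_nonneg (n / L))) hLRpos.le,
              mul_nonneg hδ₀.le (sub_nonneg.mpr hnL),
              mul_nonneg (sub_nonneg.mpr hc1') hδ₀.le,
              mul_nonneg (Nat.cast_nonneg (n / L)) (sub_pos.mpr h4D).le]
    exact lt_of_le_of_lt (Filter.limsup_le_of_le hco hev) (by linarith)
  obtain ⟨z, hz⟩ := hshad ξ hlim_err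
  obtain ⟨i, hi0, hio, hiL, hig⟩ := exists_good (g := fun i => dist (f^[i] z) (ξ i))
    (fun i => dist_nonneg) (fun i => hD _ _) hD0 hL hβ0 hz 0 (by omega) 0
  obtain ⟨j, hji, hjo, hjL, hjg⟩ := exists_good (g := fun i => dist (f^[i] z) (ξ i))
    (fun i => dist_nonneg) (fun i => hD _ _) hD0 hL hβ0 hz L le_rfl (i + 1)
  have hiL' : i % (2 * L) < L := by omega
  have hξi : ξ i = f^[i % (2 * L)] x := by rw [hξval i, if_pos hiL']
  have hξj : ξ j = f^[j % (2 * L) - L] y := by rw [hξval j, if_neg (by omega)]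
  -- chain pieces
  have chain1 : isChain f δ x (f^[i % (2 * L)] x) (i % (2 * L)) := isChain_orbit hδ x _
  have chain2 : isChain f δ (f^[i % (2 * L)] x) (f^[j] z) (j - i) := by
    refine ⟨fun k => if k = 0 then f^[i % (2 * L)] x else f^[i + k] z, by simp, ?_, ?_⟩
    · simp only [if_neg (by omega : ¬ j - i = 0)]
      congr 1
      omega
    · intro k hk
      by_cases hk0 : k = 0
      · subst hk0
        simp only [if_pos rfl, if_neg one_ne_zero]
        have h2 : dist (ξ i) (f^[i] z) < β := by rw [dist_comm]; exact hig
        have h3 := hβuc _ _ h2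
        rw [hξi] at h3
        rw [show i + 1 = i + 1 from rfl, Function.iterate_succ_apply' f i z]
        calc dist (f (f^[i % (2 * L)] x)) (f (f^[i] z)) < δ / 2 := h3
          _ < δ := by linarith
      · simp only [if_neg hk0, if_neg (by omega : ¬ k + 1 = 0)]
        rw [show i + (k + 1) = (i + k) + 1 by ring, Function.iterate_succ_apply' f (i + k) z,
          dist_self]
        exact hδ
  have chain3 : isChain f δ (f^[j] z) (f^[(j % (2 * L) - L) + 1] y) 1 := by
    refine ⟨fun k => if k = 0 then f^[j] z else f^[(j % (2 * L) - L) + 1] y, rfl, by simp, ?_⟩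
    intro k hk
    have hk0 : k = 0 := by omega
    subst hk0
    simp only [if_pos rfl, if_neg one_ne_zero]
    have h3 := hβuc _ _ hjg
    rw [hξj] at h3
    rw [Function.iterate_succ_apply' f _ y]
    calc dist (f (f^[j] z)) (f (f^[j % (2 * L) - L] y)) < δ / 2 := h3
      _ < δ := by linarith
  obtain ⟨n₄, hn₄, hc₄⟩ := iterate_back hf hy ((j % (2 * L) - L) + 1) δ hδ
  refine ⟨i % (2 * L) + (j - i) + 1 + n₄, by omega, ?_⟩
  exact isChain_trans (isChain_trans (isChain_trans chain1 chain2) chain3) hc₄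


theorem stmt12 {X : Type*} [MetricSpace X] [CompactSpace X] (f : X → X)
    (hf : Continuous f) (h : ALASP f) :
    ∀ x y : X, chainRecurrent f x → chainRecurrent f y → chainEquivalent f x y := by
  intro x y hxr hyr δ hδ
  exact ⟨chain_one_dir hf h hxr hyr δ hδ, chain_one_dir hf h hyr hxr δ hδ⟩
end

section
/- The cyclic permutation f of the two-point discrete metric space {a, b} given by f(a) = b, f(b) = a does not have the almost average shadowing property. -/
open Filter Finset

namespace Stmt13Aux

def er (x y : Bool) : ℝ := if x = y then 0 else 1

lemma dist_eq_er (x y : Bool) :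
    @dist Bool (discMetric Bool).toPseudoMetricSpace.toDist x y = er x y := by
  rw [er]
  by_cases h : x = y
  · rw [if_pos h]; subst h
    exact @dist_self Bool (discMetric Bool).toPseudoMetricSpace x
  · rw [if_neg h]; exact if_neg h

lemma er_nonneg (x y : Bool) : 0 ≤ er x y := by
  rw [er]; split <;> norm_num

lemma er_le_one (x y : Bool) : er x y ≤ 1 := by
  rw [er]; split <;> norm_num

/-- block parity -/
def q (i : ℕ) : Bool := decide (Nat.log 2 (i+1) % 2 = 1)

def xs (i : ℕ) : Bool := xor (decide (i % 2 = 1)) (q i)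

lemma parity_succ (i : ℕ) : decide ((i+1) % 2 = 1) = !decide (i % 2 = 1) := by
  rcases Nat.mod_two_eq_zero_or_one i with h | h <;> simp [Nat.add_mod, h]

lemma iter_not (i : ℕ) (z : Bool) : (fun b : Bool => !b)^[i] z = xor (decide (i % 2 = 1)) z := by
  induction i with
  | zero => simp
  | succ i ih =>
    rw [Function.iterate_succ_apply', ih, parity_succ]
    cases z <;> cases (decide (i % 2 = 1)) <;> simp

lemma err_zero {i : ℕ} (h : Nat.log 2 (i+2) = Nat.log 2 (i+1)) :
    er (!(xs i)) (xs (i+1)) = 0 := by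
  have hq : q (i+1) = q i := by simp [q, h]
  have hx : xs (i+1) = !(xs i) := by
    rw [xs, xs, parity_succ, hq]
    cases q i <;> cases (decide (i % 2 = 1)) <;> simp
  rw [hx, er, if_pos rfl]

lemma err_le (i : ℕ) :
    er (!(xs i)) (xs (i+1)) ≤ (Nat.log 2 (i+2) : ℝ) - Nat.log 2 (i+1) := by
  by_cases h : Nat.log 2 (i+2) = Nat.log 2 (i+1)
  · rw [err_zero h, h]; simp
  · have hm : Nat.log 2 (i+1) < Nat.log 2 (i+2) :=
      lt_of_le_of_ne (Nat.log_mono_right (by omega)) (Ne.symm h)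
    have h1 : (Nat.log 2 (i+1) : ℝ) + 1 ≤ Nat.log 2 (i+2) := by exact_mod_cast hm
    calc er (!(xs i)) (xs (i+1)) ≤ 1 := er_le_one _ _
    _ ≤ _ := by linarith

lemma err_sum_le (n : ℕ) :
    ∑ i ∈ Finset.range n, er (!(xs i)) (xs (i+1)) ≤ (Nat.log 2 (n+1) : ℝ) := by
  calc ∑ i ∈ Finset.range n, er (!(xs i)) (xs (i+1))
      ≤ ∑ i ∈ Finset.range n, ((Nat.log 2 (i+2) : ℝ) - Nat.log 2 (i+1)) :=
        Finset.sum_le_sum fun i _ => err_le i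
    _ = (Nat.log 2 (n+1) : ℝ) - Nat.log 2 1 :=
        Finset.sum_range_sub (fun i => (Nat.log 2 (i+1) : ℝ)) n
    _ = _ := by simp

lemma log_div_tendsto : Tendsto (fun n : ℕ => (Nat.log 2 (n+1) : ℝ) / n) atTop (nhds 0) := by
  have h1 : Tendsto (fun x : ℝ => Real.log x / x) atTop (nhds 0) :=
    Real.isLittleO_log_id_atTop.tendsto_div_nhds_zero
  have h2 : Tendsto (fun n : ℕ => ((n:ℝ)+1)) atTop atTop :=
    tendsto_atTop_add_const_right _ _ tendsto_natCast_atTop_atTop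
  have h3 : Tendsto (fun n : ℕ => Real.log ((n:ℝ)+1) / ((n:ℝ)+1)) atTop (nhds 0) := h1.comp h2
  have h4 : Tendsto (fun n : ℕ => ((n:ℝ)+1)/(n:ℝ)) atTop (nhds 1) := by
    have : Tendsto (fun n : ℕ => 1 + 1/(n:ℝ)) atTop (nhds (1+0)) :=
      tendsto_const_nhds.add (tendsto_one_div_atTop_nhds_zero_nat)
    simp only [add_zero] at this
    refine this.congr' ?_
    filter_upwards [eventually_ge_atTop 1] with n hn
    have : (n:ℝ) ≠ 0 := by positivity
    field_simp
  have h5 : Tendsto (fun n : ℕ => Real.log ((n:ℝ)+1) / (n:ℝ)) atTop (nhds 0) := by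
    have := h3.mul h4
    simp only [zero_mul] at this
    refine this.congr' ?_
    filter_upwards [eventually_ge_atTop 1] with n hn
    have hn0 : (n:ℝ) ≠ 0 := by positivity
    have hn1 : (n:ℝ)+1 ≠ 0 := by positivity
    field_simp
  have h6 : Tendsto (fun n : ℕ => Real.log ((n:ℝ)+1) / (n:ℝ) / Real.log 2) atTop (nhds 0) := by
    have := h5.div_const (Real.log 2)
    simpa using this
  refine tendsto_of_tendsto_of_tendsto_of_le_of_le tendsto_const_nhds h6 ?_ ?_
  · intro n; positivity
  · intro n
    have hU : (Nat.log 2 (n+1) : ℝ) ≤ Real.log ((n:ℝ)+1) / Real.log 2 := by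
      have := Real.natLog_le_logb (n+1) 2
      rw [Real.logb] at this
      push_cast at this
      exact this
    rcases Nat.eq_zero_or_pos n with rfl | hn
    · simp
    · have hn' : (0:ℝ) < n := by exact_mod_cast hn
      dsimp only
      rw [div_right_comm]
      exact (div_le_div_iff_of_pos_right hn').2 hU

lemma err_avg_tendsto :
    Tendsto (fun n : ℕ => (∑ i ∈ Finset.range n, er (!(xs i)) (xs (i+1))) / n)
      atTop (nhds 0) := by
  refine tendsto_of_tendsto_of_tendsto_of_le_of_le tendsto_const_nhds log_div_tendsto ?_ ?_
  · intro n
    have : 0 ≤ ∑ i ∈ Finset.range n, er (!(xs i)) (xs (i+1)) :=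
      Finset.sum_nonneg fun i _ => er_nonneg _ _
    positivity
  · intro n
    rcases Nat.eq_zero_or_pos n with rfl | hn
    · simp
    · have hn' : (0:ℝ) < n := by exact_mod_cast hn
      exact (div_le_div_iff_of_pos_right hn').2 (err_sum_le n)

lemma avg_le_one (d : ℕ → ℝ) (hd : ∀ i, d i ≤ 1) (n : ℕ) :
    (∑ i ∈ Finset.range n, d i) / n ≤ 1 := by
  rcases Nat.eq_zero_or_pos n with rfl | hn
  · simp
  · have hn' : (0:ℝ) < n := by exact_mod_cast hn
    rw [div_le_one hn']
    calc ∑ i ∈ Finset.range n, d i ≤ ∑ _i ∈ Finset.range n, (1:ℝ) :=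
          Finset.sum_le_sum fun i _ => hd i
      _ = n := by simp

lemma shadow_freq (z : Bool) :
    ∃ᶠ n in atTop,
      (1:ℝ)/2 ≤ (∑ i ∈ Finset.range n, er ((fun b : Bool => !b)^[i] z) (xs i)) / n := by
  rw [frequently_atTop]
  intro m
  set k : ℕ := 2*m + (cond z 2 1) with hk
  have hkq : decide (k % 2 = 1) = !z := by
    cases z <;> simp [hk, Nat.add_mod, Nat.mul_mod]
  have h1k : 1 ≤ 2^k := Nat.one_le_two_pow
  have hpow : 2^(k+1) = 2 * 2^k := by rw [pow_succ]; ring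
  refine ⟨2^(k+1) - 1, ?_, ?_⟩
  · have : k + 1 < 2^(k+1) := Nat.lt_two_pow_self
    omega
  · set n : ℕ := 2^(k+1) - 1 with hn
    have hkey : ∀ i ∈ Finset.Ico (2^k - 1) n, er ((fun b : Bool => !b)^[i] z) (xs i) = 1 := by
      intro i hi
      rw [Finset.mem_Ico] at hi
      have hlog : Nat.log 2 (i+1) = k :=
        Nat.log_eq_of_pow_le_of_lt_pow (by omega) (by omega)
      have hq : q i = !z := by rw [q, hlog, hkq]
      rw [iter_not, xs, hq, er, if_neg]
      cases z <;> cases (decide (i % 2 = 1)) <;> simp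
    have hsum : ((2:ℝ)^k) ≤ ∑ i ∈ Finset.range n, er ((fun b : Bool => !b)^[i] z) (xs i) := by
      have hsub : Finset.Ico (2^k - 1) n ⊆ Finset.range n := by
        intro i hi; rw [Finset.mem_Ico] at hi; exact Finset.mem_range.2 hi.2
      calc ((2:ℝ)^k) = ∑ _i ∈ Finset.Ico (2^k - 1) n, (1:ℝ) := by
            rw [Finset.sum_const, Nat.card_Ico, nsmul_eq_mul, mul_one]
            have he : n - (2^k - 1) = 2^k := by omega
            rw [he]; push_cast; ring
        _ = ∑ i ∈ Finset.Ico (2^k - 1) n, er ((fun b : Bool => !b)^[i] z) (xs i) :=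
            (Finset.sum_congr rfl hkey).symm
        _ ≤ _ := Finset.sum_le_sum_of_subset_of_nonneg hsub
            (fun i _ _ => er_nonneg _ _)
    have hn0 : 0 < n := by omega
    have hn' : (0:ℝ) < n := by exact_mod_cast hn0
    rw [div_le_div_iff₀ (by norm_num : (0:ℝ) < 2) hn']
    have hcast : (n:ℝ) = 2 * 2^k - 1 := by
      rw [hn, hpow]
      have : (1:ℕ) ≤ 2 * 2^k := by omega
      push_cast [this]
      ring
    rw [hcast]
    have h2k : (1:ℝ) ≤ 2^k := by exact_mod_cast h1k
    linarith

end Stmt13Aux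

open Stmt13Aux in
theorem stmt13 :
    ¬ @ALASP Bool (discMetric Bool).toPseudoMetricSpace (fun b : Bool => !b) := by
  intro hA
  obtain ⟨δ, hδpos, h⟩ := hA (1/3) (by norm_num)
  have hhyp : Filter.atTop.limsup
      (fun n : ℕ => (∑ i ∈ Finset.range n,
        @dist Bool (discMetric Bool).toPseudoMetricSpace.toDist
          ((fun b : Bool => !b) (xs i)) (xs (i + 1))) / n) < δ := by
    have ht : Tendsto (fun n : ℕ => (∑ i ∈ Finset.range n,
        @dist Bool (discMetric Bool).toPseudoMetricSpace.toDist
          ((fun b : Bool => !b) (xs i)) (xs (i + 1))) / n) atTop (nhds 0) := by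
      simpa only [dist_eq_er] using err_avg_tendsto
    rw [ht.limsup_eq]
    exact hδpos
  obtain ⟨z, hz⟩ := h xs hhyp
  have hb : Filter.atTop.IsBoundedUnder (· ≤ ·)
      (fun n : ℕ => (∑ i ∈ Finset.range n,
        @dist Bool (discMetric Bool).toPseudoMetricSpace.toDist
          ((fun b : Bool => !b)^[i] z) (xs i)) / n) := by
    refine isBoundedUnder_of ⟨1, fun n => ?_⟩
    simp only [dist_eq_er]
    exact avg_le_one _ (fun i => er_le_one _ _) n
  have hev := eventually_lt_of_limsup_lt hz hb
  have hfreq : ∃ᶠ n in atTop, (1:ℝ)/2 ≤ (∑ i ∈ Finset.range n,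
      @dist Bool (discMetric Bool).toPseudoMetricSpace.toDist
        ((fun b : Bool => !b)^[i] z) (xs i)) / n := by
    simp only [dist_eq_er]
    exact shadow_freq z
  obtain ⟨n, hge, hlt⟩ := (hfreq.and_eventually hev).exists
  linarith
end

section
/- On the Cantor space Σ₂ = {0,1}^ℕ with the metric d(x,y) = inf{2^{-k} : x_i = y_i for all i < k}, the identity map has the shadowing property but does not have the almost average shadowing property. -/
open Filter Finset

theorem stmt15 (m : MetricSpace (ℕ → Bool))
    (hm : ∀ x y : ℕ → Bool,
      m.dist x y = sInf {r : ℝ | ∃ k : ℕ, (∀ i < k, x i = y i) ∧ r = 2⁻¹ ^ k}) :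
    @shadowingProperty (ℕ → Bool) m.toPseudoMetricSpace id ∧
    ¬ @ALASP (ℕ → Bool) m.toPseudoMetricSpace id := by
  letI : MetricSpace (ℕ → Bool) := m
  have hm' : ∀ x y : ℕ → Bool,
      dist x y = sInf {r : ℝ | ∃ k : ℕ, (∀ i < k, x i = y i) ∧ r = 2⁻¹ ^ k} := hm
  have hbdd : ∀ x y : ℕ → Bool,
      BddBelow {r : ℝ | ∃ k : ℕ, (∀ i < k, x i = y i) ∧ r = 2⁻¹ ^ k} := by
    intro x y
    refine ⟨0, ?_⟩
    rintro r ⟨k, -, rfl⟩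
    positivity
  have hmem1 : ∀ x y : ℕ → Bool,
      (1:ℝ) ∈ {r : ℝ | ∃ k : ℕ, (∀ i < k, x i = y i) ∧ r = 2⁻¹ ^ k} := by
    intro x y
    exact ⟨0, by simp⟩
  have hle1 : ∀ x y : ℕ → Bool, dist x y ≤ 1 := by
    intro x y
    rw [hm']
    exact csInf_le (hbdd x y) (hmem1 x y)
  have hdle : ∀ (x y : ℕ → Bool) (k : ℕ), (∀ i < k, x i = y i) → dist x y ≤ 2⁻¹ ^ k := by
    intro x y k h
    rw [hm']
    exact csInf_le (hbdd x y) ⟨k, h, rfl⟩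
  have hagree : ∀ (x y : ℕ → Bool) (k : ℕ), dist x y < 2⁻¹ ^ k → ∀ i < k, x i = y i := by
    intro x y k hlt
    by_contra h
    push_neg at h
    obtain ⟨i0, hi0, hne⟩ := h
    have hge : (2⁻¹:ℝ) ^ k ≤ dist x y := by
      rw [hm']
      apply le_csInf ⟨1, hmem1 x y⟩
      rintro r ⟨k', hk', rfl⟩
      have hk'le : k' ≤ k := by
        by_contra hgt
        exact hne (hk' i0 (lt_of_lt_of_le hi0 (le_of_not_ge hgt)))
      exact pow_le_pow_of_le_one (by norm_num) (by norm_num) hk'le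
    linarith
  have hone : ∀ x y : ℕ → Bool, x 0 ≠ y 0 → dist x y = 1 := by
    intro x y hne
    refine le_antisymm (hle1 x y) ?_
    rw [hm']
    apply le_csInf ⟨1, hmem1 x y⟩
    rintro r ⟨k, hk, rfl⟩
    rcases Nat.eq_zero_or_pos k with h0 | h0
    · simp [h0]
    · exact absurd (hk 0 h0) hne
  constructor
  · -- shadowing property of the identity
    intro ε hε
    obtain ⟨k, hk⟩ := exists_pow_lt_of_lt_one hε (by norm_num : (2⁻¹:ℝ) < 1)
    refine ⟨2⁻¹ ^ k, by positivity, fun x hx => ⟨x 0, fun i => ?_⟩⟩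
    have key : ∀ i : ℕ, ∀ j < k, x 0 j = x i j := by
      intro i
      induction i with
      | zero => intro j _; rfl
      | succ n ih =>
        intro j hj
        have h2 : dist (x n) (x (n+1)) < 2⁻¹ ^ k := by simpa using hx n
        exact (ih j hj).trans (hagree (x n) (x (n+1)) k h2 j hj)
    calc dist (id^[i] (x 0)) (x i) = dist (x 0) (x i) := by
          rw [Function.iterate_id, id_eq]
      _ ≤ 2⁻¹ ^ k := hdle _ _ k (key i)
      _ < ε := hk
  · -- not ALASP
    intro hA
    obtain ⟨δ, hδ, hALL⟩ := hA (1/4) (by norm_num)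
    set L : ℕ := ⌈1/δ⌉₊ + 1 with hLdef
    have hLpos : 0 < L := Nat.succ_pos _
    have hLR : (0:ℝ) < L := by exact_mod_cast hLpos
    have hLδ : (1:ℝ) / L < δ := by
      have h1 : (1:ℝ)/δ < L := by
        calc (1:ℝ)/δ ≤ ⌈1/δ⌉₊ := Nat.le_ceil _
          _ < L := by exact_mod_cast Nat.lt_succ_self _
      rw [div_lt_iff₀ hLR]
      rw [div_lt_iff₀ hδ] at h1
      nlinarith
    clear_value L
    set a : ℕ → Bool := fun _ => false with ha
    set b : ℕ → Bool := fun _ => true with hb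
    set x : ℕ → (ℕ → Bool) := fun i => if (i / L) % 2 = 0 then a else b with hx
    -- the average jump estimate
    have hjump : ∀ i : ℕ, dist (x i) (x (i+1)) ≤ if L ∣ (i+1) then 1 else 0 := by
      intro i
      by_cases hd : L ∣ (i + 1)
      · simp only [hd, if_pos]
        exact hle1 _ _
      · have hdiv : (i+1) / L = i / L := by
          rw [Nat.succ_div, if_neg hd, add_zero]
        simp only [hd, if_false, hx, hdiv, dist_self, le_refl]
    have hsum_jump : ∀ n : ℕ,
        (∑ i ∈ Finset.range n, dist (x i) (x (i+1))) ≤ ((n / L : ℕ) : ℝ) := by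
      intro n
      calc (∑ i ∈ Finset.range n, dist (x i) (x (i+1)))
          ≤ ∑ i ∈ Finset.range n, (if L ∣ (i+1) then (1:ℝ) else 0) :=
            Finset.sum_le_sum fun i _ => hjump i
        _ = (((Finset.range n).filter (fun i => L ∣ (i+1))).card : ℝ) := by
            rw [Finset.sum_boole]
        _ = ((n / L : ℕ) : ℝ) := by rw [Nat.card_multiples]
    have havg_jump : ∀ n : ℕ,
        (∑ i ∈ Finset.range n, dist (x i) (x (i+1))) / n ≤ 1 / L := by
      intro n
      rcases Nat.eq_zero_or_pos n with rfl | hn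
      · simp
      · have hnR : (0:ℝ) < n := by exact_mod_cast hn
        have h3 : (∑ i ∈ Finset.range n, dist (x i) (x (i+1))) ≤ (n:ℝ) / L :=
          (hsum_jump n).trans Nat.cast_div_le
        rw [div_le_div_iff₀ hnR hLR]
        calc (∑ i ∈ Finset.range n, dist (x i) (x (i+1))) * L ≤ ((n:ℝ)/L) * L :=
              mul_le_mul_of_nonneg_right h3 hLR.le
          _ = 1 * n := by field_simp
    have hnonneg : ∀ n : ℕ,
        (0:ℝ) ≤ (∑ i ∈ Finset.range n, dist (x i) (x (i+1))) / n := fun n =>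
      div_nonneg (Finset.sum_nonneg fun i _ => dist_nonneg) (Nat.cast_nonneg n)
    have hlimsup_jump :
        Filter.atTop.limsup
          (fun n : ℕ => (∑ i ∈ Finset.range n, dist (id (x i)) (x (i + 1))) / n) < δ := by
      have hls : Filter.atTop.limsup
          (fun n : ℕ => (∑ i ∈ Finset.range n, dist (x i) (x (i + 1))) / n) ≤ 1 / L :=
        Filter.limsup_le_of_le (Filter.isCoboundedUnder_le_of_le _ hnonneg)
          (Filter.Eventually.of_forall havg_jump)
      calc Filter.atTop.limsup
            (fun n : ℕ => (∑ i ∈ Finset.range n, dist (id (x i)) (x (i + 1))) / n)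
          ≤ (1:ℝ)/L := by simpa using hls
        _ < δ := hLδ
    obtain ⟨z, hz⟩ := hALL x hlimsup_jump
    simp only [Function.iterate_id, id_eq] at hz
    -- the far point
    set w : ℕ → Bool := if z 0 = true then a else b with hw
    have hzw : dist z w = 1 := by
      apply hone
      rcases Bool.eq_false_or_eq_true (z 0) with h0 | h0 <;> simp [hw, h0, ha, hb]
    -- block values
    have hxa : ∀ q j : ℕ, j < L → x (2*L*q + j) = a := by
      intro q j hj
      have hidx : 2*L*q + j = j + L * (2*q) := by ring
      have hdiv : (2*L*q + j) / L = 2*q := by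
        rw [hidx, Nat.add_mul_div_left _ _ hLpos, Nat.div_eq_of_lt hj, zero_add]
      simp only [hx, hdiv, Nat.mul_mod_right, if_pos]
    have hxb : ∀ q j : ℕ, j < L → x (2*L*q + (L + j)) = b := by
      intro q j hj
      have hidx : 2*L*q + (L + j) = j + L * (2*q+1) := by ring
      have hdiv : (2*L*q + (L + j)) / L = 2*q+1 := by
        rw [hidx, Nat.add_mul_div_left _ _ hLpos, Nat.div_eq_of_lt hj, zero_add]
      have hmod : (2*q+1) % 2 = 1 := by omega
      simp only [hx, hdiv, hmod]
      norm_num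
    -- block lower bound
    have hblock : ∀ q : ℕ, (L:ℝ) ≤ ∑ j ∈ Finset.range (2*L), dist z (x (2*L*q + j)) := by
      intro q
      have hsplit : ∑ j ∈ Finset.range (2*L), dist z (x (2*L*q + j))
          = (∑ j ∈ Finset.range L, dist z (x (2*L*q + j)))
            + ∑ j ∈ Finset.range L, dist z (x (2*L*q + (L + j))) := by
        rw [two_mul, Finset.sum_range_add]
      rw [hsplit]
      rcases Bool.eq_false_or_eq_true (z 0) with h0 | h0
      · -- z 0 = true : w = a, first block counts
        have hwa : w = a := by simp [hw, h0]
        have hsum1 : ∑ j ∈ Finset.range L, dist z (x (2*L*q + j)) = L := by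
          rw [Finset.sum_congr rfl fun j hj => by
            rw [hxa q j (Finset.mem_range.mp hj), ← hwa, hzw]]
          simp
        have hsum2 : (0:ℝ) ≤ ∑ j ∈ Finset.range L, dist z (x (2*L*q + (L + j))) :=
          Finset.sum_nonneg fun j _ => dist_nonneg
        linarith
      · -- z 0 = false : w = b, second block counts
        have hwb : w = b := by simp [hw, h0]
        have hsum2 : ∑ j ∈ Finset.range L, dist z (x (2*L*q + (L + j))) = L := by
          rw [Finset.sum_congr rfl fun j hj => by
            rw [hxb q j (Finset.mem_range.mp hj), ← hwb, hzw]]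
          simp
        have hsum1 : (0:ℝ) ≤ ∑ j ∈ Finset.range L, dist z (x (2*L*q + j)) :=
          Finset.sum_nonneg fun j _ => dist_nonneg
        linarith
    -- total lower bound
    have hS : ∀ q : ℕ, ((L:ℝ) * q) ≤ ∑ i ∈ Finset.range (2*L*q), dist z (x i) := by
      intro q
      induction q with
      | zero => simp
      | succ p ih =>
        have hidx : 2*L*(p+1) = 2*L*p + 2*L := by ring
        rw [hidx, Finset.sum_range_add]
        have := hblock p
        push_cast
        push_cast at ih
        linarith
    -- frequently the average is at least 1/2
    have hfreq : ∃ᶠ n in Filter.atTop,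
        (1:ℝ)/2 ≤ (∑ i ∈ Finset.range n, dist z (x i)) / n := by
      rw [Filter.frequently_atTop]
      intro N
      refine ⟨2*L*(N+1), ?_, ?_⟩
      · calc N ≤ 2*1*(N+1) := by omega
          _ ≤ 2*L*(N+1) := by
            apply Nat.mul_le_mul_right
            omega
      · have hnpos : (0:ℝ) < (2*L*(N+1) : ℕ) := by
          have : 0 < 2*L*(N+1) := by positivity
          exact_mod_cast this
        rw [le_div_iff₀ hnpos]
        have := hS (N+1)
        push_cast
        push_cast at this
        linarith
    -- the average is bounded above by 1
    have hbdd1 : Filter.atTop.IsBoundedUnder (· ≤ ·)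
        (fun n : ℕ => (∑ i ∈ Finset.range n, dist z (x i)) / n) := by
      refine ⟨1, Filter.eventually_map.mpr (Filter.Eventually.of_forall fun n => ?_)⟩
      rcases Nat.eq_zero_or_pos n with rfl | hn
      · simp
      · have hnR : (0:ℝ) < n := by exact_mod_cast hn
        rw [div_le_one hnR]
        calc (∑ i ∈ Finset.range n, dist z (x i)) ≤ ∑ i ∈ Finset.range n, (1:ℝ) :=
              Finset.sum_le_sum fun i _ => hle1 _ _
          _ = n := by simp
    have hge : (1:ℝ)/2 ≤ Filter.atTop.limsup
        (fun n : ℕ => (∑ i ∈ Finset.range n, dist z (x i)) / n) :=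
      Filter.le_limsup_of_frequently_le hfreq hbdd1
    linarith
end
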